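/- arXiv:1203.1453 — 7 statements merged into one kernel-verified Lean document; each statement's English description precedes it below -/
import Mathlib

section
/- Let f : I ⊆ [0,∞) → ℝ be differentiable on I° with f' integrable on [a,b], where a, b ∈ I°, a < b. Fix λ, μ ∈ [0,∞) with λ + μ > 0 and q ≥ 1, and suppose |f'|^q is convex on [a,b]. Set γ₁ = (1/6)[2λ³/(λ+μ)² + 2μ − λ], γ₂ = (λ²+μ²)/(2(λ+μ)) − γ₁, γ₃ = (1/6)[2μ³/(λ+μ)² + 2λ − μ], γ₄ = (λ²+μ²)/(2(λ+μ)) − γ₃. Then |(λ f(a) + μ f(b))/(λ+μ) − (1/(b−a)) ∫_a^b f(x) dx| ≤ ((b−a)/(λ+μ)) · ((λ²+μ²)/(2(λ+μ)))^{(q−1)/q} · min{ (γ₁ |f'(b)|^q + γ₂ |f'(a)|^q)^{1/q}, (γ₃ |f'(a)|^q + γ₄ |f'(b)|^q)^{1/q} }. -/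
open MeasureTheory

lemma int_poly (d c₀ c₁ u v : ℝ) :
    ∫ x in u..v, (x - d) * (c₀ + c₁ * x) =
      (c₁*v^3/3 + (c₀ - c₁*d)*v^2/2 - d*c₀*v) - (c₁*u^3/3 + (c₀ - c₁*d)*u^2/2 - d*c₀*u) := by
  have h : ∀ x ∈ Set.uIcc u v,
      HasDerivAt (fun y => c₁*y^3/3 + (c₀ - c₁*d)*y^2/2 - d*c₀*y) ((x - d) * (c₀ + c₁ * x)) x := by
    intro x _
    have p3 : HasDerivAt (fun y : ℝ => y^3) (3*x^2) x := by simpa using hasDerivAt_pow 3 x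
    have p2 : HasDerivAt (fun y : ℝ => y^2) (2*x) x := by simpa using hasDerivAt_pow 2 x
    have pid : HasDerivAt (fun y : ℝ => d*c₀*y) (d*c₀) x := by
      simpa using (hasDerivAt_id x).const_mul (d*c₀)
    have h1 := (((p3.const_mul c₁).div_const 3).add ((p2.const_mul (c₀ - c₁*d)).div_const 2)).sub pid
    exact h1.congr_deriv (by ring)
  rw [intervalIntegral.integral_eq_sub_of_hasDerivAt h
    (Continuous.intervalIntegrable (by continuity) u v)]

lemma int_abs_linear (a b d c₀ c₁ : ℝ) (h1 : a ≤ d) (h2 : d ≤ b) :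
    ∫ x in a..b, |x - d| * (c₀ + c₁ * x) =
      (c₀ + c₁*d)*((d-a)^2 + (b-d)^2)/2 + c₁*((b-d)^3 - (d-a)^3)/3 := by
  have hi1 : IntervalIntegrable (fun x => |x - d| * (c₀ + c₁ * x)) volume a d :=
    Continuous.intervalIntegrable (by continuity) _ _
  have hi2 : IntervalIntegrable (fun x => |x - d| * (c₀ + c₁ * x)) volume d b :=
    Continuous.intervalIntegrable (by continuity) _ _
  rw [← intervalIntegral.integral_add_adjacent_intervals hi1 hi2]
  have e1 : ∫ x in a..d, |x - d| * (c₀ + c₁ * x) = ∫ x in a..d, -((x-d) * (c₀ + c₁ * x)) := by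
    apply intervalIntegral.integral_congr
    intro x hx
    rw [Set.uIcc_of_le h1] at hx
    show |x - d| * (c₀ + c₁ * x) = -((x-d) * (c₀ + c₁ * x))
    rw [abs_of_nonpos (by linarith [hx.2])]
    ring
  have e2 : ∫ x in d..b, |x - d| * (c₀ + c₁ * x) = ∫ x in d..b, (x-d) * (c₀ + c₁ * x) := by
    apply intervalIntegral.integral_congr
    intro x hx
    rw [Set.uIcc_of_le h2] at hx
    show |x - d| * (c₀ + c₁ * x) = (x-d) * (c₀ + c₁ * x)
    rw [abs_of_nonneg (by linarith [hx.1])]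
  rw [e1, e2, intervalIntegral.integral_neg, int_poly, int_poly]
  ring

set_option maxHeartbeats 2000000 in
/-- Corollary: the case `m = α = 1` of Theorem 2.2 of the paper. -/
theorem stmt_2 (I : Set ℝ) (hI : Convex ℝ I) (hI0 : I ⊆ Set.Ici (0:ℝ))
    (f f' : ℝ → ℝ) (a b : ℝ) (ha : a ∈ interior I) (hb : b ∈ interior I) (hab : a < b)
    (hf : ∀ x ∈ interior I, HasDerivAt f (f' x) x)
    (hint : IntervalIntegrable f' volume a b)
    (lam mu : ℝ) (hlam : 0 ≤ lam) (hmu : 0 ≤ mu) (hlm : 0 < lam + mu)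
    (q : ℝ) (hq : 1 ≤ q)
    (hconv : ConvexOn ℝ (Set.Icc a b) (fun x => |f' x| ^ q))
    (γ1 γ2 γ3 γ4 : ℝ)
    (hγ1 : γ1 = (1 / 6) * (2 * lam ^ 3 / (lam + mu) ^ 2 + 2 * mu - lam))
    (hγ2 : γ2 = (lam ^ 2 + mu ^ 2) / (2 * (lam + mu)) - γ1)
    (hγ3 : γ3 = (1 / 6) * (2 * mu ^ 3 / (lam + mu) ^ 2 + 2 * lam - mu))
    (hγ4 : γ4 = (lam ^ 2 + mu ^ 2) / (2 * (lam + mu)) - γ3) :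
    |(lam * f a + mu * f b) / (lam + mu) - (1 / (b - a)) * (∫ x in a..b, f x)| ≤
      ((b - a) / (lam + mu)) * ((lam ^ 2 + mu ^ 2) / (2 * (lam + mu))) ^ ((q - 1) / q) *
        min ((γ1 * |f' b| ^ q + γ2 * |f' a| ^ q) ^ (1 / q))
            ((γ3 * |f' a| ^ q + γ4 * |f' b| ^ q) ^ (1 / q)) := by
  have hba : (0:ℝ) < b - a := by linarith
  have hba' : b - a ≠ 0 := ne_of_gt hba
  have hlm' : lam + mu ≠ 0 := ne_of_gt hlm
  have hqpos : (0:ℝ) < q := lt_of_lt_of_le one_pos hq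
  have hq0 : q ≠ 0 := ne_of_gt hqpos
  set d : ℝ := (lam * b + mu * a) / (lam + mu) with hd
  have had : a ≤ d := by
    rw [hd, le_div_iff₀ hlm]; nlinarith
  have hdb : d ≤ b := by
    rw [hd, div_le_iff₀ hlm]; nlinarith
  set A : ℝ := |f' a| ^ q with hA
  set B : ℝ := |f' b| ^ q with hB
  have hA0 : 0 ≤ A := Real.rpow_nonneg (abs_nonneg _) q
  have hB0 : 0 ≤ B := Real.rpow_nonneg (abs_nonneg _) q
  set S : ℝ := (lam ^ 2 + mu ^ 2) / (2 * (lam + mu)) with hS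
  set K : ℝ := γ3 * A + γ4 * B with hK
  have hS0 : 0 ≤ S := by rw [hS]; exact div_nonneg (by positivity) (by linarith)
  have hγ3' : γ3 = (2*lam^3 + 3*lam^2*mu + mu^3)/(6*(lam+mu)^2) := by
    rw [hγ3]; field_simp; ring
  have hγ4' : γ4 = (2*mu^3 + 3*mu^2*lam + lam^3)/(6*(lam+mu)^2) := by
    rw [hγ4, hS, hγ3]; field_simp; ring
  have hg30 : 0 ≤ γ3 := by
    rw [hγ3']
    refine div_nonneg ?_ (by positivity)
    nlinarith [mul_nonneg (mul_nonneg hlam hlam) hlam, mul_nonneg (mul_nonneg hlam hlam) hmu,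
      mul_nonneg (mul_nonneg hmu hmu) hmu]
  have hg40 : 0 ≤ γ4 := by
    rw [hγ4']
    refine div_nonneg ?_ (by positivity)
    nlinarith [mul_nonneg (mul_nonneg hlam hlam) hlam, mul_nonneg (mul_nonneg hmu hmu) hlam,
      mul_nonneg (mul_nonneg hmu hmu) hmu]
  have hK0 : 0 ≤ K := by rw [hK]; exact add_nonneg (mul_nonneg hg30 hA0) (mul_nonneg hg40 hB0)
  have heq : γ1 * B + γ2 * A = K := by
    rw [hK, hγ2, hγ4, hS, hγ1, hγ3]; field_simp; ring
  -- the interval lies in the interior of I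
  have hIcc : Set.Icc a b ⊆ interior I := (hI.interior).ordConnected.out ha hb
  have hIcc' : Set.uIcc a b ⊆ interior I := by
    rw [Set.uIcc_of_le hab.le]; exact hIcc
  -- integration by parts identity
  have hparts := intervalIntegral.integral_mul_deriv_eq_deriv_mul
      (u := fun x => x - d) (u' := fun _ => (1:ℝ)) (v := f) (v' := f')
      (fun x _ => (hasDerivAt_id x).sub_const d)
      (fun x hx => hf x (hIcc' hx))
      intervalIntegrable_const hint
  have hparts' : ∫ x in a..b, (x - d) * f' x
      = (b - d) * f b - (a - d) * f a - ∫ x in a..b, f x := by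
    simpa using hparts
  have hid : (lam * f a + mu * f b) / (lam + mu) - 1 / (b - a) * (∫ x in a..b, f x)
      = (1/(b-a)) * ∫ x in a..b, (x - d) * f' x := by
    rw [hparts', hd]
    field_simp
    ring
  have habs : |(lam * f a + mu * f b) / (lam + mu) - 1 / (b - a) * ∫ x in a..b, f x|
      ≤ (1/(b-a)) * ∫ x in a..b, |x - d| * |f' x| := by
    rw [hid, abs_mul, abs_of_nonneg (le_of_lt (one_div_pos.mpr hba))]
    refine mul_le_mul_of_nonneg_left ?_ (one_div_nonneg.mpr hba.le)
    calc |∫ x in a..b, (x - d) * f' x| ≤ ∫ x in a..b, |(x - d) * f' x| :=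
          intervalIntegral.abs_integral_le_integral_abs hab.le
      _ = ∫ x in a..b, |x - d| * |f' x| := by
          apply intervalIntegral.integral_congr
          intro x _
          exact abs_mul _ _
  -- measurability
  have hfm : AEStronglyMeasurable f' (volume.restrict (Set.Ioc a b)) := hint.1.1
  have hfabs : AEStronglyMeasurable (fun x => |f' x|) (volume.restrict (Set.Ioc a b)) := by
    simpa only [Real.norm_eq_abs] using hfm.norm
  have hWm : AEStronglyMeasurable (fun x => |f' x| ^ q) (volume.restrict (Set.Ioc a b)) :=
    (hfabs.aemeasurable.pow_const q).aestronglyMeasurable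
  -- convexity pointwise bound
  have hcv : ∀ x ∈ Set.Icc a b, |f' x| ^ q ≤ ((b - x) * A + (x - a) * B) / (b - a) := by
    intro x hx
    have h1 : (0:ℝ) ≤ (b - x)/(b-a) := div_nonneg (by linarith [hx.2]) hba.le
    have h2 : (0:ℝ) ≤ (x - a)/(b-a) := div_nonneg (by linarith [hx.1]) hba.le
    have hsum : (b - x)/(b-a) + (x - a)/(b-a) = 1 := by field_simp; ring
    have h := hconv.2 (Set.left_mem_Icc.2 hab.le) (Set.right_mem_Icc.2 hab.le) h1 h2 hsum
    have hxx : ((b - x)/(b-a)) • a + ((x - a)/(b-a)) • b = x := by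
      simp only [smul_eq_mul]; field_simp; ring
    rw [hxx] at h
    simp only [smul_eq_mul] at h
    calc |f' x| ^ q ≤ (b - x)/(b-a) * A + (x - a)/(b-a) * B := h
      _ = ((b - x) * A + (x - a) * B) / (b - a) := by field_simp
  have hMbd : ∀ x ∈ Set.Icc a b, |f' x| ^ q ≤ max A B := by
    intro x hx
    refine le_trans (hcv x hx) ?_
    rw [div_le_iff₀ hba]
    have e1 : (b - x) * A ≤ (b - x) * max A B :=
      mul_le_mul_of_nonneg_left (le_max_left A B) (by linarith [hx.2])
    have e2 : (x - a) * B ≤ (x - a) * max A B :=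
      mul_le_mul_of_nonneg_left (le_max_right A B) (by linarith [hx.1])
    calc (b - x) * A + (x - a) * B ≤ (b - x) * max A B + (x - a) * max A B := add_le_add e1 e2
      _ = max A B * (b - a) := by ring
  have hxd : ∀ x ∈ Set.Ioc a b, |x - d| ≤ b - a := by
    intro x hx
    rw [abs_le]
    constructor <;> [linarith [hx.1, hdb]; linarith [hx.2, had]]
  -- integrability of the weighted q-power
  have hGm : AEStronglyMeasurable (fun x => |x - d| * |f' x| ^ q)
      (volume.restrict (Set.Ioc a b)) :=
    ((continuous_abs.comp (continuous_id.sub continuous_const)).aestronglyMeasurable).mul hWm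
  have hmax0 : 0 ≤ max A B := le_trans hA0 (le_max_left A B)
  have hGint : IntervalIntegrable (fun x => |x - d| * |f' x| ^ q) volume a b := by
    rw [intervalIntegrable_iff_integrableOn_Ioc_of_le hab.le]
    refine Integrable.mono' (integrable_const ((b - a) * max A B)) hGm ?_
    filter_upwards [ae_restrict_mem measurableSet_Ioc] with x hx
    rw [Real.norm_eq_abs,
      abs_of_nonneg (mul_nonneg (abs_nonneg _) (Real.rpow_nonneg (abs_nonneg _) q))]
    exact mul_le_mul (hxd x hx) (hMbd x ⟨hx.1.le, hx.2⟩)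
      (Real.rpow_nonneg (abs_nonneg _) q) hba.le
  -- the two integral computations
  have hE0 : ∫ x in a..b, |x - d| = ((b - a)^2/(lam+mu)) * S := by
    have h0 : ∫ x in a..b, |x - d| = ∫ x in a..b, |x - d| * (1 + 0 * x) := by
      apply intervalIntegral.integral_congr
      intro x _
      show |x - d| = |x - d| * (1 + 0 * x)
      ring
    rw [h0, int_abs_linear a b d 1 0 had hdb, hS, hd]
    field_simp
    ring
  have hE1 : ∫ x in a..b, |x - d| * |f' x| ^ q ≤ ((b - a)^2/(lam+mu)) * K := by
    have step1 : ∫ x in a..b, |x - d| * |f' x| ^ q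
        ≤ ∫ x in a..b, (1/(b-a)) * (|x - d| * ((b*A - a*B) + (B - A) * x)) := by
      refine intervalIntegral.integral_mono_on hab.le hGint
        (Continuous.intervalIntegrable (by continuity) _ _) ?_
      intro x hx
      have h := hcv x hx
      have hrw : (1/(b-a)) * (|x - d| * ((b*A - a*B) + (B - A) * x))
          = |x - d| * (((b - x) * A + (x - a) * B) / (b - a)) := by
        rw [div_eq_mul_inv, div_eq_mul_inv]; ring
      rw [hrw]
      exact mul_le_mul_of_nonneg_left h (abs_nonneg _)
    rw [intervalIntegral.integral_const_mul, int_abs_linear a b d _ _ had hdb] at step1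
    refine le_trans step1 (le_of_eq ?_)
    rw [hK, hγ3', hγ4', hd]
    field_simp
    ring
  -- reduce the min
  rw [heq, min_self]
  rcases eq_or_lt_of_le hq with hq1 | hq1
  · -- q = 1
    subst hq1
    rw [show ((1:ℝ)-1)/1 = 0 by norm_num, show (1:ℝ)/1 = 1 by norm_num,
      Real.rpow_zero, Real.rpow_one, mul_one]
    refine le_trans habs ?_
    have hE1' : ∫ x in a..b, |x - d| * |f' x| ≤ ((b - a)^2/(lam+mu)) * K := by
      simpa using hE1
    calc (1/(b-a)) * ∫ x in a..b, |x - d| * |f' x|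
        ≤ (1/(b-a)) * (((b - a)^2/(lam+mu)) * K) :=
          mul_le_mul_of_nonneg_left hE1' (one_div_nonneg.mpr hba.le)
      _ = (b-a)/(lam+mu) * K := by field_simp
  · -- 1 < q
    have hpq : (q / (q - 1)).HolderConjugate q := (Real.HolderConjugate.conjExponent hq1).symm
    set p : ℝ := q / (q - 1) with hp
    have hp0 : p ≠ 0 := hpq.ne_zero
    have h1p0 : 0 ≤ 1/p := hpq.one_div_nonneg
    have h1q0 : 0 ≤ 1/q := hpq.symm.one_div_nonneg
    have hX : (0:ℝ) < (b-a)^2/(lam+mu) := div_pos (pow_pos hba 2) hlm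
    have hp1 : 1/p = (q-1)/q := by rw [hp, one_div_div]
    have hsum1 : 1/p + 1/q = 1 := by
      rw [one_div, one_div]; exact hpq.inv_add_inv_eq_one
    set U : ℝ → ℝ := fun x => |x - d| ^ (1/p) with hU
    set V : ℝ → ℝ := fun x => |x - d| ^ (1/q) * |f' x| with hV
    haveI hfin : IsFiniteMeasure (volume.restrict (Set.Ioc a b)) :=
      ⟨by rw [Measure.restrict_apply_univ]; exact measure_Ioc_lt_top⟩
    have hUc : Continuous U :=
      (continuous_abs.comp (continuous_id.sub continuous_const)).rpow_const
        (fun x => Or.inr h1p0)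
    have hUmem : MemLp U (ENNReal.ofReal p) (volume.restrict (Set.Ioc a b)) := by
      refine MemLp.mono_exponent ?_ le_top
      refine memLp_top_of_bound hUc.aestronglyMeasurable ((b-a) ^ (1/p)) ?_
      filter_upwards [ae_restrict_mem measurableSet_Ioc] with x hx
      rw [Real.norm_eq_abs, abs_of_nonneg (Real.rpow_nonneg (abs_nonneg _) _)]
      exact Real.rpow_le_rpow (abs_nonneg _) (hxd x hx) h1p0
    have hVm : AEStronglyMeasurable V (volume.restrict (Set.Ioc a b)) :=
      (((continuous_abs.comp (continuous_id.sub continuous_const)).rpow_const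
        (fun x => Or.inr h1q0)).aestronglyMeasurable).mul hfabs
    have hVmem : MemLp V (ENNReal.ofReal q) (volume.restrict (Set.Ioc a b)) := by
      refine MemLp.mono_exponent ?_ le_top
      refine memLp_top_of_bound hVm ((b-a) ^ (1/q) * (max A B) ^ (1/q)) ?_
      filter_upwards [ae_restrict_mem measurableSet_Ioc] with x hx
      rw [Real.norm_eq_abs,
        abs_of_nonneg (mul_nonneg (Real.rpow_nonneg (abs_nonneg _) _) (abs_nonneg _))]
      have h1 : |x - d| ^ (1/q) ≤ (b-a) ^ (1/q) :=
        Real.rpow_le_rpow (abs_nonneg _) (hxd x hx) h1q0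
      have h2 : |f' x| ≤ (max A B) ^ (1/q) := by
        have h4 : (|f' x| ^ q) ^ (1/q) ≤ (max A B) ^ (1/q) :=
          Real.rpow_le_rpow (Real.rpow_nonneg (abs_nonneg _) _) (hMbd x ⟨hx.1.le, hx.2⟩)
            h1q0
        rwa [← Real.rpow_mul (abs_nonneg _), mul_one_div_cancel hq0, Real.rpow_one] at h4
      exact mul_le_mul h1 h2 (abs_nonneg _) (Real.rpow_nonneg hba.le _)
    have hHold := integral_mul_le_Lp_mul_Lq_of_nonneg hpq
      (Filter.Eventually.of_forall fun x => Real.rpow_nonneg (abs_nonneg _) _)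
      (Filter.Eventually.of_forall fun x =>
        mul_nonneg (Real.rpow_nonneg (abs_nonneg _) _) (abs_nonneg _))
      hUmem hVmem
    have hUV : ∀ x, U x * V x = |x - d| * |f' x| := by
      intro x
      show |x - d| ^ (1/p) * (|x - d| ^ (1/q) * |f' x|) = |x - d| * |f' x|
      rw [← mul_assoc, ← Real.rpow_add' (abs_nonneg _) (by rw [hsum1]; norm_num),
        hsum1, Real.rpow_one]
    have hUp : ∀ x, U x ^ p = |x - d| := by
      intro x
      show (|x - d| ^ (1/p)) ^ p = |x - d|
      rw [← Real.rpow_mul (abs_nonneg _), one_div_mul_cancel hp0, Real.rpow_one]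
    have hVq : ∀ x, V x ^ q = |x - d| * |f' x| ^ q := by
      intro x
      show (|x - d| ^ (1/q) * |f' x|) ^ q = _
      rw [Real.mul_rpow (Real.rpow_nonneg (abs_nonneg _) _) (abs_nonneg _),
        ← Real.rpow_mul (abs_nonneg _), one_div_mul_cancel hq0, Real.rpow_one]
    have hHold' : ∫ x in a..b, |x - d| * |f' x|
        ≤ (((b-a)^2/(lam+mu)) * S) ^ (1/p) * (((b-a)^2/(lam+mu)) * K) ^ (1/q) := by
      have e1 : ∫ x in a..b, |x - d| * |f' x| = ∫ x in Set.Ioc a b, U x * V x := by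
        rw [intervalIntegral.integral_of_le hab.le]
        exact integral_congr_ae (Filter.Eventually.of_forall fun x => (hUV x).symm)
      have e2 : ∫ x in Set.Ioc a b, U x ^ p = ((b-a)^2/(lam+mu)) * S := by
        calc ∫ x in Set.Ioc a b, U x ^ p = ∫ x in Set.Ioc a b, |x - d| :=
              integral_congr_ae (Filter.Eventually.of_forall fun x => hUp x)
          _ = ∫ x in a..b, |x - d| := (intervalIntegral.integral_of_le hab.le).symm
          _ = _ := hE0
      have e3 : ∫ x in Set.Ioc a b, V x ^ q ≤ ((b-a)^2/(lam+mu)) * K := by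
        calc ∫ x in Set.Ioc a b, V x ^ q = ∫ x in Set.Ioc a b, |x - d| * |f' x| ^ q :=
              integral_congr_ae (Filter.Eventually.of_forall fun x => hVq x)
          _ = ∫ x in a..b, |x - d| * |f' x| ^ q := (intervalIntegral.integral_of_le hab.le).symm
          _ ≤ _ := hE1
      calc ∫ x in a..b, |x - d| * |f' x| = ∫ x in Set.Ioc a b, U x * V x := e1
        _ ≤ (∫ x in Set.Ioc a b, U x ^ p) ^ (1/p) * (∫ x in Set.Ioc a b, V x ^ q) ^ (1/q) := hHold
        _ ≤ (((b-a)^2/(lam+mu)) * S) ^ (1/p) * (((b-a)^2/(lam+mu)) * K) ^ (1/q) := by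
            rw [e2]
            refine mul_le_mul_of_nonneg_left ?_ (Real.rpow_nonneg (mul_nonneg hX.le hS0) _)
            refine Real.rpow_le_rpow ?_ e3 h1q0
            exact integral_nonneg fun x => by rw [hVq x]; positivity
    refine le_trans habs ?_
    calc (1/(b-a)) * ∫ x in a..b, |x - d| * |f' x|
        ≤ (1/(b-a)) * ((((b-a)^2/(lam+mu)) * S) ^ (1/p) * (((b-a)^2/(lam+mu)) * K) ^ (1/q)) :=
          mul_le_mul_of_nonneg_left hHold' (one_div_nonneg.mpr hba.le)
      _ = (1/(b-a)) * (((b-a)^2/(lam+mu)) * (S ^ ((q-1)/q) * K ^ (1/q))) := by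
          rw [Real.mul_rpow hX.le hS0, Real.mul_rpow hX.le hK0, hp1, mul_mul_mul_comm,
            ← Real.rpow_add hX, ← add_div, show q - 1 + 1 = q from by ring,
            div_self hq0, Real.rpow_one]
      _ = (b-a)/(lam+mu) * S ^ ((q-1)/q) * K ^ (1/q) := by
          field_simp
end

section
/- Let f : I ⊆ [0,∞) → ℝ be differentiable on I° with f' integrable on [a,b], where a, b ∈ I°, a < b. Fix λ, μ ∈ [0,∞) with λ + μ > 0 and q > 1 with 1/p + 1/q = 1, and suppose |f'|^q is convex on [a,b]. Then |(λ f(a) + μ f(b))/(λ+μ) − (1/(b−a)) ∫_a^b f(x) dx| ≤ ((b−a)/(λ+μ)) · ((λ^{p+1} + μ^{p+1})/(λ+μ))^{1/p} · (1/(p+1))^{1/p} · (1/2)^{1/q} · (|f'(a)|^q + |f'(b)|^q)^{1/q}. -/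
open MeasureTheory

set_option maxHeartbeats 1000000 in

/-- Corollary: the case `m = α = 1` of Theorem 2.6 of the paper. -/
theorem stmt_7 (I : Set ℝ) (hI : Convex ℝ I) (hI0 : I ⊆ Set.Ici (0:ℝ))
    (f f' : ℝ → ℝ) (a b : ℝ) (ha : a ∈ interior I) (hb : b ∈ interior I) (hab : a < b)
    (hf : ∀ x ∈ interior I, HasDerivAt f (f' x) x)
    (hint : IntervalIntegrable f' volume a b)
    (lam mu : ℝ) (hlam : 0 ≤ lam) (hmu : 0 ≤ mu) (hlm : 0 < lam + mu)
    (p q : ℝ) (hq : 1 < q) (hpq : 1 / p + 1 / q = 1)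
    (hconv : ConvexOn ℝ (Set.Icc a b) (fun x => |f' x| ^ q)) :
    |(lam * f a + mu * f b) / (lam + mu) - (1 / (b - a)) * (∫ x in a..b, f x)| ≤
      ((b - a) / (lam + mu)) * ((lam ^ (p + 1) + mu ^ (p + 1)) / (lam + mu)) ^ (1 / p) *
        (1 / (p + 1)) ^ (1 / p) * (1 / 2 : ℝ) ^ (1 / q) *
        (|f' a| ^ q + |f' b| ^ q) ^ (1 / q) := by
  have hd : 0 < b - a := sub_pos.2 hab
  have hq0 : 0 < q := lt_trans one_pos hq
  have h1q : 0 < 1 - 1/q := by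
    have : 1/q < 1 := by rw [div_lt_one hq0]; exact hq
    linarith
  have hp0 : 0 < p := by
    have : 0 < 1/p := by rw [show (1:ℝ)/p = 1 - 1/q by linarith]; exact h1q
    exact (one_div_pos).1 this
  have hp1 : 1 < p := by
    have h1 : 1/p < 1 := by
      rw [show (1:ℝ)/p = 1 - 1/q by linarith]
      have : 0 < 1/q := by positivity
      linarith
    rw [div_lt_one hp0] at h1; exact h1
  have hpq' : Real.HolderConjugate p q :=
    Real.holderConjugate_iff.mpr ⟨hp1, by rw [← one_div, ← one_div]; exact hpq⟩
  have hIcc : Set.Icc a b ⊆ interior I := by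
    have h2 : Convex ℝ (interior I) := hI.interior
    exact h2.ordConnected.out ha hb
  set S := lam + mu with hSdef
  set c := (lam * b + mu * a) / S with hcdef
  have hcS : c * S = lam * b + mu * a := by rw [hcdef, div_mul_cancel₀ _ hlm.ne']
  have hca : c - a = lam * (b - a) / S := by
    field_simp [hcdef]; linear_combination hcS - a * hSdef
  have hbc : b - c = mu * (b - a) / S := by
    field_simp [hcdef]; linear_combination b * hSdef - hcS
  have hac : a ≤ c := by
    have : 0 ≤ c - a := by rw [hca]; positivity
    linarith
  have hcb : c ≤ b := by
    have : 0 ≤ b - c := by rw [hbc]; positivity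
    linarith
  -- integration by parts
  have huIcc : Set.uIcc a b = Set.Icc a b := Set.uIcc_of_le hab.le
  have hintc : IntervalIntegrable (fun x => (x - c) * f' x) volume a b :=
    hint.continuousOn_mul ((continuous_id.sub continuous_const).continuousOn)
  have hibp : ∫ x in a..b, (x - c) * f' x
      = (b - c) * f b - (a - c) * f a - ∫ x in a..b, f x := by
    have h := intervalIntegral.integral_mul_deriv_eq_deriv_mul
      (u := fun x => x - c) (u' := fun _ => (1:ℝ)) (v := f) (v' := f')
      (fun x hx => (hasDerivAt_id x).sub_const c)
      (fun x hx => hf x (hIcc (huIcc ▸ hx)))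
      intervalIntegrable_const hint
    simpa using h
  have hkey : (lam * f a + mu * f b) / S - (1/(b-a)) * ∫ x in a..b, f x
      = (1/(b-a)) * ∫ x in a..b, (x - c) * f' x := by
    rw [hibp]
    have hS0 : S ≠ 0 := ne_of_gt hlm
    have hd0 : b - a ≠ 0 := ne_of_gt hd
    field_simp [hcdef]
    linear_combination (f b - f a) * hcS + (f a * a - f b * b) * hSdef
  -- convexity pointwise bound
  set Ga := |f' a| ^ q with hGa
  set Gb := |f' b| ^ q with hGb
  have hGa0 : 0 ≤ Ga := Real.rpow_nonneg (abs_nonneg _) q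
  have hGb0 : 0 ≤ Gb := Real.rpow_nonneg (abs_nonneg _) q
  have hptwise : ∀ x ∈ Set.Icc a b,
      |f' x| ^ q ≤ ((b - x) * Ga + (x - a) * Gb) / (b - a) := by
    intro x hx
    have ht0 : 0 ≤ (b - x)/(b - a) := by
      apply div_nonneg _ hd.le; linarith [hx.2]
    have hs0 : 0 ≤ (x - a)/(b - a) := by
      apply div_nonneg _ hd.le; linarith [hx.1]
    have hts : (b - x)/(b - a) + (x - a)/(b - a) = 1 := by
      field_simp
      ring
    have h := hconv.2 (Set.left_mem_Icc.2 hab.le) (Set.right_mem_Icc.2 hab.le) ht0 hs0 hts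
    have hxe : ((b - x)/(b - a)) • a + ((x - a)/(b - a)) • b = x := by
      simp only [smul_eq_mul]
      field_simp
      ring
    simp only [smul_eq_mul] at h hxe
    rw [hxe] at h
    calc |f' x| ^ q ≤ (b - x)/(b - a) * Ga + (x - a)/(b - a) * Gb := h
      _ = ((b - x) * Ga + (x - a) * Gb) / (b - a) := by ring
  have hAbound : ∀ x ∈ Set.Icc a b, |f' x| ^ q ≤ Ga + Gb := by
    intro x hx
    refine (hptwise x hx).trans ?_
    rw [div_le_iff₀ hd]
    nlinarith [hx.1, hx.2, hGa0, hGb0]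
  -- integrability of |f'|^q
  have hmeas : AEStronglyMeasurable (fun x => |f' x| ^ q)
      (volume.restrict (Set.Ioc a b)) := by
    have h1 : AEStronglyMeasurable f' (volume.restrict (Set.Ioc a b)) :=
      hint.1.aestronglyMeasurable
    have hcont : Continuous (fun y : ℝ => |y| ^ q) :=
      (continuous_abs).rpow_const (fun x => Or.inr hq0.le)
    exact hcont.comp_aestronglyMeasurable h1
  have hintq : IntervalIntegrable (fun x => |f' x| ^ q) volume a b := by
    rw [intervalIntegrable_iff_integrableOn_Ioc_of_le hab.le]
    refine Integrable.mono' (integrable_const (Ga + Gb)) hmeas ?_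
    refine (ae_restrict_mem measurableSet_Ioc).mono fun x hx => ?_
    rw [Real.norm_eq_abs, abs_of_nonneg (Real.rpow_nonneg (abs_nonneg _) q)]
    exact hAbound x (Set.Ioc_subset_Icc_self hx)
  -- Hermite-Hadamard type bound
  have hHH : ∫ x in a..b, |f' x| ^ q ≤ (b - a) * (Ga + Gb) / 2 := by
    have hintL : IntervalIntegrable
        (fun x => ((b - x) * Ga + (x - a) * Gb) / (b - a)) volume a b := by
      exact (((continuous_const.sub continuous_id).mul continuous_const).add
        ((continuous_id.sub continuous_const).mul continuous_const)).div_const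
        (b-a) |>.intervalIntegrable _ _
    have h1 : ∫ x in a..b, |f' x| ^ q
        ≤ ∫ x in a..b, ((b - x) * Ga + (x - a) * Gb) / (b - a) :=
      intervalIntegral.integral_mono_on hab.le hintq hintL hptwise
    refine h1.trans_eq ?_
    have heq : (fun x => ((b - x) * Ga + (x - a) * Gb) / (b - a))
        = fun x => (b * Ga - a * Gb)/(b - a) + ((Gb - Ga)/(b - a)) * x := by
      funext x; field_simp; ring
    rw [heq]
    rw [intervalIntegral.integral_add (intervalIntegrable_const)
      ((intervalIntegral.intervalIntegrable_id).const_mul _)]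
    rw [intervalIntegral.integral_const, intervalIntegral.integral_const_mul, integral_id]
    have hd0 : b - a ≠ 0 := ne_of_gt hd
    rw [smul_eq_mul]
    field_simp
    ring
  -- exact value of the p-integral
  have hintp : ∀ u v : ℝ, IntervalIntegrable (fun x => |x - c| ^ p) volume u v := by
    intro u v
    exact ((continuous_abs.comp (continuous_id.sub continuous_const)).rpow_const
      (fun x => Or.inr hp0.le)).intervalIntegrable _ _
  have hIp : ∫ x in a..b, |x - c| ^ p = ((c - a) ^ (p+1) + (b - c) ^ (p+1)) / (p + 1) := by
    have hsplit : (∫ x in a..c, |x - c| ^ p) + (∫ x in c..b, |x - c| ^ p)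
        = ∫ x in a..b, |x - c| ^ p :=
      intervalIntegral.integral_add_adjacent_intervals (hintp a c) (hintp c b)
    have h1 : ∫ x in a..c, |x - c| ^ p = (c - a) ^ (p+1) / (p+1) := by
      have he : Set.EqOn (fun x => |x - c| ^ p) (fun x => (fun y : ℝ => y ^ p) (c - x))
          (Set.uIcc a c) := by
        intro x hx
        rw [Set.uIcc_of_le hac] at hx
        simp only
        rw [abs_of_nonpos (by linarith [hx.2] : x - c ≤ 0), neg_sub]
      rw [intervalIntegral.integral_congr he,
        intervalIntegral.integral_comp_sub_left (fun y : ℝ => y ^ p) c, sub_self,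
        integral_rpow (Or.inl (by linarith : (-1:ℝ) < p)),
        Real.zero_rpow (by linarith : p + 1 ≠ 0)]
      ring
    have h2 : ∫ x in c..b, |x - c| ^ p = (b - c) ^ (p+1) / (p+1) := by
      have he : Set.EqOn (fun x => |x - c| ^ p) (fun x => (fun y : ℝ => y ^ p) (x - c))
          (Set.uIcc c b) := by
        intro x hx
        rw [Set.uIcc_of_le hcb] at hx
        simp only
        rw [abs_of_nonneg (by linarith [hx.1] : 0 ≤ x - c)]
      rw [intervalIntegral.integral_congr he,
        intervalIntegral.integral_comp_sub_right (fun y : ℝ => y ^ p) c, sub_self,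
        integral_rpow (Or.inl (by linarith : (-1:ℝ) < p)),
        Real.zero_rpow (by linarith : p + 1 ≠ 0)]
      ring
    rw [← hsplit, h1, h2]
    ring
  -- Hoelder
  have hfin : IsFiniteMeasure (volume.restrict (Set.Ioc a b)) := by
    constructor
    rw [Measure.restrict_apply_univ, Real.volume_Ioc]
    exact ENNReal.ofReal_lt_top
  have hMF : MemLp (fun x => |x - c|) (ENNReal.ofReal p) (volume.restrict (Set.Ioc a b)) := by
    refine MemLp.of_bound
      ((continuous_abs.comp (continuous_id.sub continuous_const)).aestronglyMeasurable)
      (b - a) ?_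
    filter_upwards [ae_restrict_mem measurableSet_Ioc] with x hx
    rw [Real.norm_eq_abs, abs_abs, abs_le]
    constructor <;> [linarith [hx.1, hcb]; linarith [hx.2, hac]]
  have hMG : MemLp (fun x => |f' x|) (ENNReal.ofReal q) (volume.restrict (Set.Ioc a b)) := by
    refine MemLp.of_bound
      (continuous_abs.comp_aestronglyMeasurable hint.1.aestronglyMeasurable)
      ((Ga + Gb) ^ (1/q)) ?_
    filter_upwards [ae_restrict_mem measurableSet_Ioc] with x hx
    rw [Real.norm_eq_abs, abs_abs]
    have h := Real.rpow_le_rpow (Real.rpow_nonneg (abs_nonneg _) q)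
      (hAbound x (Set.Ioc_subset_Icc_self hx)) (by positivity : (0:ℝ) ≤ 1/q)
    rwa [← Real.rpow_mul (abs_nonneg _), mul_one_div, div_self hq0.ne', Real.rpow_one] at h
  have hHolder : ∫ x in a..b, |x - c| * |f' x|
      ≤ (∫ x in a..b, |x - c| ^ p) ^ (1/p) * (∫ x in a..b, |f' x| ^ q) ^ (1/q) := by
    rw [intervalIntegral.integral_of_le hab.le, intervalIntegral.integral_of_le hab.le,
        intervalIntegral.integral_of_le hab.le]
    exact integral_mul_le_Lp_mul_Lq_of_nonneg hpq'
      (Filter.Eventually.of_forall fun x => abs_nonneg _)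
      (Filter.Eventually.of_forall fun x => abs_nonneg _) hMF hMG
  have habs : |∫ x in a..b, (x - c) * f' x| ≤ ∫ x in a..b, |x - c| * |f' x| := by
    have h := intervalIntegral.abs_integral_le_integral_abs
      (f := fun x => (x - c) * f' x) (μ := volume) hab.le
    simpa only [abs_mul] using h
  -- nonnegativity of integrals
  have hIp0 : 0 ≤ ∫ x in a..b, |x - c| ^ p :=
    intervalIntegral.integral_nonneg hab.le fun x _ => Real.rpow_nonneg (abs_nonneg _) p
  have hIq0 : 0 ≤ ∫ x in a..b, |f' x| ^ q :=
    intervalIntegral.integral_nonneg hab.le fun x _ => Real.rpow_nonneg (abs_nonneg _) q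
  have t2 : (∫ x in a..b, |f' x| ^ q) ^ (1/q) ≤ ((b-a) * (Ga + Gb) / 2) ^ (1/q) :=
    Real.rpow_le_rpow hIq0 hHH (by positivity)
  have tmain : |∫ x in a..b, (x - c) * f' x|
      ≤ (((c - a) ^ (p+1) + (b - c) ^ (p+1)) / (p + 1)) ^ (1/p)
        * ((b-a) * (Ga + Gb) / 2) ^ (1/q) := by
    refine (habs.trans hHolder).trans ?_
    rw [hIp]
    have hca0 : (0:ℝ) ≤ c - a := by linarith
    have hbc0 : (0:ℝ) ≤ b - c := by linarith
    exact mul_le_mul_of_nonneg_left t2 (Real.rpow_nonneg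
      (div_nonneg (add_nonneg (Real.rpow_nonneg hca0 _) (Real.rpow_nonneg hbc0 _))
        (by linarith)) _)
  -- final algebra
  have hca0 : (0:ℝ) ≤ c - a := by linarith
  have hbc0 : (0:ℝ) ≤ b - c := by linarith
  set X := lam ^ (p+1) + mu ^ (p+1) with hXdef
  have hX0 : 0 ≤ X := add_nonneg (Real.rpow_nonneg hlam _) (Real.rpow_nonneg hmu _)
  have e0 : (c - a) ^ (p+1) + (b - c) ^ (p+1) = (b - a) ^ (p+1) * X / S ^ (p+1) := by
    rw [hca, hbc, Real.div_rpow (mul_nonneg hlam hd.le) hlm.le,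
        Real.div_rpow (mul_nonneg hmu hd.le) hlm.le,
        Real.mul_rpow hlam hd.le, Real.mul_rpow hmu hd.le]
    ring
  have e1 : ((b-a) ^ (p+1) * X / S ^ (p+1) / (p+1)) ^ (1/p)
      = ((b-a) ^ (p+1)) ^ (1/p) * X ^ (1/p) * ((S ^ (p+1)) ^ (1/p))⁻¹
        * ((p+1:ℝ)⁻¹) ^ (1/p) := by
    rw [show (b-a) ^ (p+1) * X / S ^ (p+1) / (p+1)
        = ((b-a) ^ (p+1) * X) * ((S ^ (p+1))⁻¹ * (p+1)⁻¹) by ring]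
    rw [Real.mul_rpow (mul_nonneg (Real.rpow_nonneg hd.le _) hX0)
        (mul_nonneg (inv_nonneg.2 (Real.rpow_nonneg hlm.le _)) (by positivity)),
        Real.mul_rpow (Real.rpow_nonneg hd.le _) hX0,
        Real.mul_rpow (inv_nonneg.2 (Real.rpow_nonneg hlm.le _)) (by positivity),
        Real.inv_rpow (Real.rpow_nonneg hlm.le _)]
    ring
  have e2 : ((b-a) * (Ga + Gb) / 2) ^ (1/q)
      = (b-a) ^ (1/q) * (Ga + Gb) ^ (1/q) * ((2:ℝ)⁻¹) ^ (1/q) := by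
    rw [show (b-a) * (Ga + Gb) / 2 = ((b-a) * (Ga+Gb)) * (2:ℝ)⁻¹ by ring,
        Real.mul_rpow (mul_nonneg hd.le (by positivity)) (by norm_num),
        Real.mul_rpow hd.le (by positivity)]
  have e3 : ((b-a) ^ (p+1)) ^ (1/p) = (b-a) ^ ((p+1) * (1/p)) :=
    (Real.rpow_mul hd.le _ _).symm
  have e5 : (S ^ (p+1)) ^ (1/p) = S * S ^ (1/p) := by
    rw [← Real.rpow_mul hlm.le, show (p+1) * (1/p) = 1 + 1/p by field_simp [hp0.ne'],
        Real.rpow_add hlm, Real.rpow_one]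
  have e4 : (1/(b-a)) * ((b-a) ^ ((p+1) * (1/p)) * (b-a) ^ (1/q)) = b - a := by
    rw [← Real.rpow_add hd, show (p+1) * (1/p) + 1/q = 2 by
      have h1 : (p+1) * (1/p) = 1 + 1/p := by field_simp [hp0.ne']
      rw [h1]; linarith,
      show (2:ℝ) = (1:ℝ) + 1 by norm_num, Real.rpow_add hd, Real.rpow_one]
    field_simp
  have halg : (1/(b-a)) * ((((c - a) ^ (p+1) + (b - c) ^ (p+1)) / (p + 1)) ^ (1/p)
      * ((b-a) * (Ga + Gb) / 2) ^ (1/q))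
      = ((b - a) / S) * (X / S) ^ (1/p) * (1/(p+1)) ^ (1/p) * ((1:ℝ)/2) ^ (1/q)
        * (Ga + Gb) ^ (1/q) := by
    rw [e0, e1, e2, e3, e5]
    rw [show (X / S) ^ (1/p) = X ^ (1/p) * (S ^ (1/p))⁻¹ by
      rw [div_eq_mul_inv, Real.mul_rpow hX0 (inv_nonneg.2 hlm.le), Real.inv_rpow hlm.le]]
    rw [one_div (p+1), one_div (2:ℝ), mul_inv]
    linear_combination (X ^ (1/p) * (S⁻¹ * (S^(1/p))⁻¹) * (((p+1:ℝ)⁻¹)^(1/p))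
      * ((Ga+Gb)^(1/q)) * (((2:ℝ)⁻¹)^(1/q))) * e4
  rw [hkey, abs_mul, abs_of_pos (by positivity : (0:ℝ) < 1/(b-a))]
  calc (1/(b-a)) * |∫ x in a..b, (x - c) * f' x|
      ≤ (1/(b-a)) * ((((c - a) ^ (p+1) + (b - c) ^ (p+1)) / (p + 1)) ^ (1/p)
        * ((b-a) * (Ga + Gb) / 2) ^ (1/q)) :=
        mul_le_mul_of_nonneg_left tmain (by positivity)
    _ = _ := halg
end

section
/- Let f : [0,∞) → ℝ be (α,m)-convex with (α,m) ∈ (0,1]², let 0 ≤ a < b < ∞, and suppose f is integrable on [a,b]. Then (1/(b−a)) ∫_a^b f(x) dx ≤ min{ [f(a) + α m f(b/m)]/(α+1), [f(b) + α m f(a/m)]/(α+1) }. -/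
open MeasureTheory

/-- A function `g` is `(α, m)`-convex on a set `s`. -/
def AMConvexOn (α m : ℝ) (s : Set ℝ) (g : ℝ → ℝ) : Prop :=
  ∀ x ∈ s, ∀ y ∈ s, ∀ t ∈ Set.Icc (0:ℝ) 1,
    g (t * x + m * (1 - t) * y) ≤ t ^ α * g x + m * (1 - t ^ α) * g y

lemma aux_hh (f : ℝ → ℝ) (α m : ℝ) (hα0 : 0 < α) (hm0 : 0 < m)
    (hconv : AMConvexOn α m (Set.Ici 0) f)
    (c d : ℝ) (hc : 0 ≤ c) (hd : 0 ≤ d) (hcd : c ≠ d)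
    (hint : IntervalIntegrable f volume d c) :
    (c - d)⁻¹ * (∫ x in d..c, f x) ≤ (f c + α * m * f (d / m)) / (α + 1) := by
  have hcd' : c - d ≠ 0 := sub_ne_zero.mpr hcd
  have hα1 : α + 1 ≠ 0 := by positivity
  have hcv : ∫ t in (0:ℝ)..1, f ((c - d) * t + d) = (c - d)⁻¹ * ∫ x in d..c, f x := by
    rw [intervalIntegral.integral_comp_mul_add f hcd' d]
    norm_num [smul_eq_mul]
  have hg : IntervalIntegrable (fun t => f ((c - d) * t + d)) volume 0 1 := by
    have h1 := hint.comp_add_right d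
    have h2 := h1.comp_mul_left (c := c - d)
    have e1 : (d - d) / (c - d) = 0 := by simp
    have e2 : (c - d) / (c - d) = 1 := by field_simp
    simpa [e1, e2] using h2
  have hrpow : IntervalIntegrable (fun t : ℝ => t ^ α) volume 0 1 :=
    intervalIntegral.intervalIntegrable_rpow' (by linarith)
  have hr : IntervalIntegrable (fun t : ℝ => t ^ α * f c + m * (1 - t ^ α) * f (d / m))
      volume 0 1 :=
    (hrpow.mul_const _).add (((intervalIntegrable_const.sub hrpow).const_mul m).mul_const _)
  have hpt : ∀ t ∈ Set.Icc (0:ℝ) 1,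
      f ((c - d) * t + d) ≤ t ^ α * f c + m * (1 - t ^ α) * f (d / m) := by
    intro t ht
    have h := hconv c hc (d / m) (div_nonneg hd hm0.le) t ht
    have heq : t * c + m * (1 - t) * (d / m) = (c - d) * t + d := by
      field_simp; ring
    rwa [heq] at h
  have hmono := intervalIntegral.integral_mono_on (by norm_num : (0:ℝ) ≤ 1) hg hr hpt
  have h0 : ∫ t in (0:ℝ)..1, t ^ α = 1 / (α + 1) := by
    rw [integral_rpow (Or.inl (by linarith))]
    rw [Real.one_rpow, Real.zero_rpow (by linarith)]
    ring
  have hI : ∫ t in (0:ℝ)..1, (t ^ α * f c + m * (1 - t ^ α) * f (d / m))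
      = (f c + α * m * f (d / m)) / (α + 1) := by
    rw [intervalIntegral.integral_add (hrpow.mul_const _)
      (((intervalIntegrable_const.sub hrpow).const_mul m).mul_const _),
      intervalIntegral.integral_mul_const, h0]
    have : ∫ t in (0:ℝ)..1, m * (1 - t ^ α) * f (d / m)
        = m * (1 - 1 / (α + 1)) * f (d / m) := by
      rw [intervalIntegral.integral_mul_const, intervalIntegral.integral_const_mul,
        intervalIntegral.integral_sub intervalIntegrable_const hrpow,
        intervalIntegral.integral_const, h0]
      norm_num
    rw [this, show (1:ℝ) - 1 / (α + 1) = α / (α + 1) by field_simp; ring]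
    ring
  rw [hcv, hI] at hmono
  exact hmono

/-- Theorem 1.2 of the paper (Hermite–Hadamard type inequality for `(α, m)`-convex
functions). -/
theorem stmt_9 (f : ℝ → ℝ)
    (α m : ℝ) (hα : α ∈ Set.Ioc (0:ℝ) 1) (hm : m ∈ Set.Ioc (0:ℝ) 1)
    (hconv : AMConvexOn α m (Set.Ici 0) f)
    (a b : ℝ) (ha : 0 ≤ a) (hab : a < b)
    (hint : IntegrableOn f (Set.Icc a b)) :
    (1 / (b - a)) * (∫ x in a..b, f x) ≤
      min ((f a + α * m * f (b / m)) / (α + 1))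
          ((f b + α * m * f (a / m)) / (α + 1)) := by
  have hb : 0 ≤ b := le_of_lt (lt_of_le_of_lt ha hab)
  have hii : IntervalIntegrable f volume a b := by
    rw [intervalIntegrable_iff_integrableOn_Icc_of_le hab.le]; exact hint
  have hba' : (b : ℝ) - a ≠ 0 := sub_ne_zero.mpr hab.ne'
  refine le_min ?_ ?_
  · have h := aux_hh f α m hα.1 hm.1 hconv a b ha hb hab.ne hii.symm
    have : (a - b)⁻¹ * ∫ x in b..a, f x = (1 / (b - a)) * ∫ x in a..b, f x := by
      rw [intervalIntegral.integral_symm a b,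
        show a - b = -(b - a) by ring, inv_neg, neg_mul, one_div]
      ring
    linarith [this ▸ h]
  · have h := aux_hh f α m hα.1 hm.1 hconv b a hb ha hab.ne' hii
    have : (b - a)⁻¹ * ∫ x in a..b, f x = (1 / (b - a)) * ∫ x in a..b, f x := by
      rw [one_div]
    linarith [this ▸ h]
end

section
/- Let 0 < a < b and let n ∈ ℤ with |n| ≥ 2. For λ, μ ∈ [0,∞) with λ + μ > 0 and q ≥ 1, set γ₁ = (1/6)[2λ³/(λ+μ)² + 2μ − λ], γ₂ = (λ²+μ²)/(2(λ+μ)) − γ₁, γ₃ = (1/6)[2μ³/(λ+μ)² + 2λ − μ], γ₄ = (λ²+μ²)/(2(λ+μ)) − γ₃. Then |A_{λ/(λ+μ)}(aⁿ, bⁿ) − Lₙⁿ(a,b)| ≤ ((b−a)/(λ+μ)) · ((λ²+μ²)/(2(λ+μ)))^{(q−1)/q} · |n| · min{ (γ₁ b^{q(n−1)} + γ₂ a^{q(n−1)})^{1/q}, (γ₃ a^{q(n−1)} + γ₄ b^{q(n−1)})^{1/q} }. -/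
open MeasureTheory intervalIntegral Set Filter

lemma cont_w (c : ℝ) : Continuous fun t : ℝ => |t - c| := by continuity

lemma int_w (c : ℝ) (hc0 : 0 ≤ c) (hc1 : c ≤ 1) :
    ∫ t in (0:ℝ)..1, |t - c| = c^2 - c + 1/2 := by
  have h1 : ∫ t in (0:ℝ)..c, |t - c| = c^2/2 := by
    rw [intervalIntegral.integral_congr (g := fun t => c - t)]
    · rw [intervalIntegral.integral_sub intervalIntegrable_const intervalIntegral.intervalIntegrable_id]
      simp [integral_id]
      ring
    · intro t ht
      rw [Set.uIcc_of_le hc0] at ht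
      simp only
      rw [abs_of_nonpos (by linarith [ht.2])]
      ring
  have h2 : ∫ t in c..(1:ℝ), |t - c| = (1-c)^2/2 := by
    rw [intervalIntegral.integral_congr (g := fun t => t - c)]
    · rw [intervalIntegral.integral_sub intervalIntegral.intervalIntegrable_id intervalIntegrable_const]
      simp [integral_id]
      ring
    · intro t ht
      rw [Set.uIcc_of_le hc1] at ht
      simp only
      rw [abs_of_nonneg (by linarith [ht.1])]
  rw [← intervalIntegral.integral_add_adjacent_intervals (b := c)
    ((cont_w c).intervalIntegrable _ _) ((cont_w c).intervalIntegrable _ _), h1, h2]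
  ring

lemma int_wt (c : ℝ) (hc0 : 0 ≤ c) (hc1 : c ≤ 1) :
    ∫ t in (0:ℝ)..1, |t - c| * t = c^3/3 - c/2 + 1/3 := by
  have h1 : ∫ t in (0:ℝ)..c, |t - c| * t = c^3/6 := by
    rw [intervalIntegral.integral_congr (g := fun t => c * t - t^2)]
    · rw [intervalIntegral.integral_sub (by apply Continuous.intervalIntegrable; continuity)
        (by apply Continuous.intervalIntegrable; continuity)]
      rw [intervalIntegral.integral_const_mul, integral_id]
      simp [integral_pow]
      ring
    · intro t ht
      rw [Set.uIcc_of_le hc0] at ht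
      simp only
      rw [abs_of_nonpos (by linarith [ht.2])]
      ring
  have h2 : ∫ t in c..(1:ℝ), |t - c| * t = 1/3 - c/2 + c^3/6 := by
    rw [intervalIntegral.integral_congr (g := fun t => t^2 - c * t)]
    · rw [intervalIntegral.integral_sub (by apply Continuous.intervalIntegrable; continuity)
        (by apply Continuous.intervalIntegrable; continuity)]
      rw [intervalIntegral.integral_const_mul, integral_id]
      simp [integral_pow]
      ring
    · intro t ht
      rw [Set.uIcc_of_le hc1] at ht
      simp only
      rw [abs_of_nonneg (by linarith [ht.1])]
      ring
  rw [← intervalIntegral.integral_add_adjacent_intervals (b := c)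
    (Continuous.intervalIntegrable (by continuity) _ _)
    (Continuous.intervalIntegrable (by continuity) _ _), h1, h2]
  ring

lemma xpos' {a b : ℝ} (ha : 0 < a) (hb : 0 < b) {t : ℝ} (ht0 : 0 ≤ t) (ht1 : t ≤ 1) :
    0 < (1-t)*a + t*b := by
  rcases lt_or_ge t 1 with h | h
  · nlinarith [mul_pos (by linarith : (0:ℝ) < 1 - t) ha, mul_nonneg ht0 hb.le]
  · have : t = 1 := le_antisymm ht1 h
    subst this; simpa using hb

lemma zpow_convex_comb {A B : ℝ} (hA : 0 < A) (hB : 0 < B) (m : ℤ) (hm : m ≠ 0)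
    {t : ℝ} (ht0 : 0 ≤ t) (ht1 : t ≤ 1) :
    ((1-t)*A + t*B) ^ m ≤ (1-t) * A^m + t * B^m := by
  rcases eq_or_ne m 1 with rfl | hm1
  · simp
  · have h := (strictConvexOn_zpow hm hm1).convexOn.2 (Set.mem_Ioi.mpr hA)
      (Set.mem_Ioi.mpr hB) (by linarith : (0:ℝ) ≤ 1 - t) ht0 (by ring)
    simpa [smul_eq_mul] using h

lemma rpow_key {y : ℝ} (hy : 0 < y) (q : ℝ) (m : ℤ) : y ^ (q * (m:ℝ)) = (y ^ m) ^ q := by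
  rw [mul_comm, Real.rpow_mul hy.le, Real.rpow_intCast]

lemma conv_pt {A B : ℝ} (hA : 0 < A) (hB : 0 < B) (m : ℤ) (hm : m ≠ 0)
    {q : ℝ} (hq : 1 ≤ q) {t : ℝ} (ht0 : 0 ≤ t) (ht1 : t ≤ 1) :
    ((1-t)*A + t*B) ^ (q * (m:ℝ)) ≤ (1-t) * A ^ (q*(m:ℝ)) + t * B ^ (q*(m:ℝ)) := by
  have hx : 0 < (1-t)*A + t*B := xpos' hA hB ht0 ht1
  rw [rpow_key hx, rpow_key hA, rpow_key hB]
  calc (((1-t)*A + t*B)^m) ^ q ≤ ((1-t) * A^m + t * B^m) ^ q := by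
        apply Real.rpow_le_rpow (zpow_pos hx m).le (zpow_convex_comb hA hB m hm ht0 ht1)
          (by linarith)
    _ ≤ (1-t) * (A^m)^q + t * (B^m)^q := by
        have h := (convexOn_rpow hq).2 (Set.mem_Ici.mpr (zpow_pos hA m).le)
          (Set.mem_Ici.mpr (zpow_pos hB m).le) (by linarith : (0:ℝ) ≤ 1 - t) ht0 (by ring)
        simpa [smul_eq_mul] using h

lemma stepB (a b : ℝ) (ha : 0 < a) (hb : 0 < b) (m : ℤ) (hm : m ≠ 0)
    (q : ℝ) (hq : 1 ≤ q) (c : ℝ) (hc0 : 0 ≤ c) (hc1 : c ≤ 1) :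
    ∫ t in (0:ℝ)..1, |t - c| * ((1-t)*a + t*b) ^ (q*(m:ℝ))
      ≤ (c^3/3 - c/2 + 1/3) * b^(q*(m:ℝ)) + ((c^2-c+1/2) - (c^3/3-c/2+1/3)) * a^(q*(m:ℝ)) := by
  have hw := int_w c hc0 hc1
  have hwt := int_wt c hc0 hc1
  have hint1 : IntervalIntegrable (fun t => |t - c| * ((1-t)*a + t*b) ^ (q*(m:ℝ)))
      volume 0 1 := by
    apply ContinuousOn.intervalIntegrable
    refine ((cont_w c).continuousOn).mul
      (ContinuousOn.rpow_const (by fun_prop) (fun t ht => Or.inl (ne_of_gt ?_)))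
    rw [Set.uIcc_of_le (by norm_num : (0:ℝ) ≤ 1)] at ht
    exact xpos' ha hb ht.1 ht.2
  have hint2 : IntervalIntegrable
      (fun t => |t - c| * ((1-t) * a^(q*(m:ℝ)) + t * b^(q*(m:ℝ)))) volume 0 1 :=
    Continuous.intervalIntegrable (by continuity) _ _
  have h1 : ∫ t in (0:ℝ)..1, |t - c| * ((1-t)*a + t*b) ^ (q*(m:ℝ))
      ≤ ∫ t in (0:ℝ)..1, |t - c| * ((1-t) * a^(q*(m:ℝ)) + t * b^(q*(m:ℝ))) := by
    apply intervalIntegral.integral_mono_on (by norm_num) hint1 hint2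
    intro t ht
    exact mul_le_mul_of_nonneg_left (conv_pt ha hb m hm hq ht.1 ht.2) (abs_nonneg _)
  refine h1.trans_eq ?_
  have expand : ∀ t : ℝ, |t - c| * ((1-t) * a^(q*(m:ℝ)) + t * b^(q*(m:ℝ)))
      = a^(q*(m:ℝ)) * |t - c| + (b^(q*(m:ℝ)) - a^(q*(m:ℝ))) * (|t - c| * t) := by
    intro t; ring
  rw [intervalIntegral.integral_congr (fun t _ => expand t),
    intervalIntegral.integral_add
      (Continuous.intervalIntegrable (by continuity) _ _)
      (Continuous.intervalIntegrable (by continuity) _ _),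
    intervalIntegral.integral_const_mul, intervalIntegral.integral_const_mul, hw, hwt]
  ring

lemma stepA (a b : ℝ) (ha : 0 < a) (hb : 0 < b) (m : ℤ) (hm : m ≠ 0)
    (q : ℝ) (hq : 1 ≤ q) (c : ℝ) (hc0 : 0 ≤ c) (hc1 : c ≤ 1) :
    ∫ t in (0:ℝ)..1, |t - c| * ((1-t)*a + t*b)^m
      ≤ (c^2 - c + 1/2)^((q-1)/q)
        * (∫ t in (0:ℝ)..1, |t - c| * ((1-t)*a + t*b)^(q*(m:ℝ)))^(1/q) := by
  rcases eq_or_lt_of_le hq with rfl | hq1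
  · -- q = 1
    simp only [sub_self, zero_div, Real.rpow_zero, one_mul, one_div, inv_one, Real.rpow_one]
    apply le_of_eq
    apply intervalIntegral.integral_congr
    intro t ht
    rw [Set.uIcc_of_le (by norm_num : (0:ℝ) ≤ 1)] at ht
    simp only
    rw [show ((m:ℝ)) = (1:ℝ) * (m:ℝ) by ring, rpow_key (xpos' ha hb ht.1 ht.2) 1 m,
      Real.rpow_one]
  · -- 1 < q
    have hq0 : 0 < q := by linarith
    have hqm1 : 0 < q - 1 := by linarith
    set μ := volume.restrict (Set.Ioc (0:ℝ) 1) with hμ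
    haveI : IsFiniteMeasure μ := by
      constructor
      rw [hμ, Measure.restrict_apply_univ, Real.volume_Ioc]
      exact ENNReal.ofReal_lt_top
    have hpq : (q/(q-1)).HolderConjugate q := by
      rw [Real.holderConjugate_iff]
      constructor
      · rw [lt_div_iff₀ hqm1]; linarith
      · field_simp; ring
    set f : ℝ → ℝ := fun t => |t - c| ^ ((q-1)/q) with hf_def
    set g : ℝ → ℝ := fun t => |t - c| ^ (1/q) * ((1-t)*a + t*b)^m with hg_def
    have habs1 : ∀ t ∈ Set.Ioc (0:ℝ) 1, |t - c| ≤ 1 := by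
      intro t ht
      rw [abs_le]; constructor
      · linarith [ht.1]
      · linarith [ht.2]
    have hf_mem : MemLp f (ENNReal.ofReal (q/(q-1))) μ := by
      apply MemLp.of_bound ((Real.continuous_rpow_const (by positivity)).comp
        (cont_w c)).aestronglyMeasurable 1
      filter_upwards [ae_restrict_mem measurableSet_Ioc] with t ht
      simp only [Function.comp_apply]
      rw [Real.norm_eq_abs, abs_of_nonneg (Real.rpow_nonneg (abs_nonneg _) _)]
      exact Real.rpow_le_one (abs_nonneg _) (habs1 t ht) (by positivity)
    have hg_mem : MemLp g (ENNReal.ofReal q) μ := by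
      apply MemLp.of_bound ?_ (a^m + b^m) ?_
      · apply ContinuousOn.aestronglyMeasurable ?_ measurableSet_Ioc
        apply ContinuousOn.mul
        · exact ((Real.continuous_rpow_const (by positivity)).comp (cont_w c)).continuousOn
        · apply ContinuousOn.zpow₀ (by fun_prop)
          intro t ht
          exact Or.inl (ne_of_gt (xpos' ha hb ht.1.le ht.2))
      · filter_upwards [ae_restrict_mem measurableSet_Ioc] with t ht
        have hx := xpos' ha hb ht.1.le ht.2
        simp only [hg_def]
        rw [Real.norm_eq_abs, abs_of_nonneg
          (mul_nonneg (Real.rpow_nonneg (abs_nonneg _) _) (zpow_pos hx m).le)]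
        have h1 : |t - c| ^ (1/q) ≤ 1 :=
          Real.rpow_le_one (abs_nonneg _) (habs1 t ht) (by positivity)
        have h2 : ((1-t)*a + t*b)^m ≤ (1-t) * a^m + t * b^m :=
          zpow_convex_comb ha hb m hm ht.1.le ht.2
        nlinarith [zpow_pos hx m, zpow_pos ha m, zpow_pos hb m, ht.1.le, ht.2,
          Real.rpow_nonneg (abs_nonneg (t - c)) (1/q)]
    have hfg := integral_mul_le_Lp_mul_Lq_of_nonneg hpq
      (Filter.Eventually.of_forall fun t => Real.rpow_nonneg (abs_nonneg _) _)
      (by filter_upwards [ae_restrict_mem measurableSet_Ioc] with t ht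
          exact mul_nonneg (Real.rpow_nonneg (abs_nonneg _) _)
            (zpow_pos (xpos' ha hb ht.1.le ht.2) m).le)
      hf_mem hg_mem
    have e_lhs : ∫ t in (0:ℝ)..1, |t - c| * ((1-t)*a + t*b)^m = ∫ t, f t * g t ∂μ := by
      rw [intervalIntegral.integral_of_le (by norm_num : (0:ℝ) ≤ 1)]
      apply setIntegral_congr_fun measurableSet_Ioc
      intro t ht
      simp only [hf_def, hg_def]
      rw [← mul_assoc, ← Real.rpow_add_of_nonneg (abs_nonneg _) (by positivity) (by positivity)]
      rw [show (q-1)/q + 1/q = 1 by field_simp; ring, Real.rpow_one]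
    have e_f : ∫ t, f t ^ (q/(q-1)) ∂μ = c^2 - c + 1/2 := by
      have hpt : ∀ t : ℝ, f t ^ (q/(q-1)) = |t - c| := by
        intro t
        simp only [hf_def]
        rw [← Real.rpow_mul (abs_nonneg _),
          show (q-1)/q * (q/(q-1)) = 1 by field_simp, Real.rpow_one]
      simp_rw [hpt]
      rw [← intervalIntegral.integral_of_le (by norm_num : (0:ℝ) ≤ 1)]
      exact int_w c hc0 hc1
    have e_g : ∫ t, g t ^ q ∂μ = ∫ t in (0:ℝ)..1, |t - c| * ((1-t)*a + t*b)^(q*(m:ℝ)) := by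
      rw [intervalIntegral.integral_of_le (by norm_num : (0:ℝ) ≤ 1)]
      symm
      apply setIntegral_congr_fun measurableSet_Ioc
      intro t ht
      have hx := xpos' ha hb ht.1.le ht.2
      simp only [hg_def]
      rw [Real.mul_rpow (Real.rpow_nonneg (abs_nonneg _) _) (zpow_pos hx m).le,
        ← Real.rpow_mul (abs_nonneg _), one_div, inv_mul_cancel₀ (ne_of_gt hq0),
        Real.rpow_one, rpow_key hx q m]
    rw [e_lhs]
    refine hfg.trans ?_
    rw [e_f, e_g, show 1/(q/(q-1)) = (q-1)/q by rw [one_div_div]]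


lemma ident (a b : ℝ) (ha : 0 < a) (hab : a < b) (n : ℤ) (hn : (n:ℝ) + 1 ≠ 0) (c : ℝ) :
    c * a^n + (1-c) * b^n - (b^(n+1) - a^(n+1))/(((n:ℝ)+1)*(b-a))
      = (b-a) * ∫ t in (0:ℝ)..1, (t - c) * (n:ℝ) * (a + t*(b-a))^(n-1) := by
  have hba : (0:ℝ) < b - a := by linarith
  set G : ℝ → ℝ := fun t => (t-c)*(a + t*(b-a))^n/(b-a)
      - (a + t*(b-a))^(n+1)/(((n:ℝ)+1)*(b-a)^2) with hG
  have hxpos : ∀ t ∈ Set.uIcc (0:ℝ) 1, 0 < a + t*(b-a) := by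
    intro t ht
    rw [Set.uIcc_of_le (by norm_num : (0:ℝ) ≤ 1)] at ht
    nlinarith [ht.1, ht.2]
  have hderiv : ∀ t ∈ Set.uIcc (0:ℝ) 1,
      HasDerivAt G ((t - c) * (n:ℝ) * (a + t*(b-a))^(n-1)) t := by
    intro t ht
    have hx0 : a + t*(b-a) ≠ 0 := ne_of_gt (hxpos t ht)
    have hx : HasDerivAt (fun t : ℝ => a + t*(b-a)) (b-a) t := by
      simpa using ((hasDerivAt_id t).mul_const (b-a)).const_add a
    have h1 : HasDerivAt (fun t : ℝ => (a + t*(b-a))^n)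
        ((n:ℝ) * (a + t*(b-a))^(n-1) * (b-a)) t :=
      (hasDerivAt_zpow n _ (Or.inl hx0)).comp_of_eq t hx rfl
    have h2 : HasDerivAt (fun t : ℝ => (a + t*(b-a))^(n+1))
        (((n:ℝ)+1) * (a + t*(b-a))^n * (b-a)) t := by
      have := (hasDerivAt_zpow (n+1) _ (Or.inl hx0)).comp t hx
      simpa [Function.comp_def] using this
    have h3 : HasDerivAt (fun t : ℝ => (t-c)*(a + t*(b-a))^n)
        (1 * (a + t*(b-a))^n + (t-c) * ((n:ℝ) * (a + t*(b-a))^(n-1) * (b-a))) t :=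
      ((hasDerivAt_id t).sub_const c).mul h1
    have h4 := (h3.div_const (b-a)).sub (h2.div_const (((n:ℝ)+1)*(b-a)^2))
    refine h4.congr_deriv ?_
    have e1 : (a + t*(b-a))^n = (a + t*(b-a))^(n-1) * (a + t*(b-a)) := by
      rw [← zpow_add_one₀ hx0]; norm_num
    rw [e1]
    field_simp
    ring
  have hcont : IntervalIntegrable (fun t => (t - c) * (n:ℝ) * (a + t*(b-a))^(n-1))
      volume 0 1 := by
    apply ContinuousOn.intervalIntegrable
    apply ContinuousOn.mul
    · exact (Continuous.continuousOn (by continuity))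
    · exact ContinuousOn.zpow₀ (by fun_prop) _ (fun t ht => Or.inl (ne_of_gt (hxpos t ht)))
  rw [intervalIntegral.integral_eq_sub_of_hasDerivAt hderiv hcont]
  have hG1 : G 1 = (1-c)*b^n/(b-a) - b^(n+1)/(((n:ℝ)+1)*(b-a)^2) := by
    simp only [hG]; norm_num
  have hG0 : G 0 = (0-c)*a^n/(b-a) - a^(n+1)/(((n:ℝ)+1)*(b-a)^2) := by
    simp only [hG]; norm_num
  rw [hG1, hG0]
  field_simp
  ring

set_option maxHeartbeats 2000000 in
/-- Proposition 3.1 of the paper: application to special means, where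
`A_{λ/(λ+μ)}(aⁿ, bⁿ) = (λ/(λ+μ)) aⁿ + (μ/(λ+μ)) bⁿ` and
`Lₙⁿ(a,b) = (b^{n+1} - a^{n+1})/((n+1)(b-a))`. -/
theorem stmt_10 (a b : ℝ) (ha : 0 < a) (hab : a < b)
    (n : ℤ) (hn : 2 ≤ |n|)
    (lam mu : ℝ) (hlam : 0 ≤ lam) (hmu : 0 ≤ mu) (hlm : 0 < lam + mu)
    (q : ℝ) (hq : 1 ≤ q)
    (γ1 γ2 γ3 γ4 : ℝ)
    (hγ1 : γ1 = (1 / 6) * (2 * lam ^ 3 / (lam + mu) ^ 2 + 2 * mu - lam))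
    (hγ2 : γ2 = (lam ^ 2 + mu ^ 2) / (2 * (lam + mu)) - γ1)
    (hγ3 : γ3 = (1 / 6) * (2 * mu ^ 3 / (lam + mu) ^ 2 + 2 * lam - mu))
    (hγ4 : γ4 = (lam ^ 2 + mu ^ 2) / (2 * (lam + mu)) - γ3) :
    |(lam / (lam + mu)) * a ^ n + (mu / (lam + mu)) * b ^ n -
        (b ^ (n + 1) - a ^ (n + 1)) / (((n : ℝ) + 1) * (b - a))| ≤
      ((b - a) / (lam + mu)) * ((lam ^ 2 + mu ^ 2) / (2 * (lam + mu))) ^ ((q - 1) / q) *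
        |(n : ℝ)| *
        min ((γ1 * b ^ (q * ((n : ℝ) - 1)) + γ2 * a ^ (q * ((n : ℝ) - 1))) ^ (1 / q))
            ((γ3 * a ^ (q * ((n : ℝ) - 1)) + γ4 * b ^ (q * ((n : ℝ) - 1))) ^ (1 / q)) := by
  have hb : (0:ℝ) < b := lt_trans ha hab
  have hba : (0:ℝ) < b - a := by linarith
  have hq0 : (0:ℝ) < q := by linarith
  have hlm' : lam + mu ≠ 0 := ne_of_gt hlm
  have hn2 : 2 ≤ n ∨ n ≤ -2 := by
    rcases abs_cases n with ⟨h, _⟩ | ⟨h, _⟩ <;> omega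
  have hm : n - 1 ≠ 0 := by omega
  have hn1 : ((n:ℝ) + 1) ≠ 0 := by
    have h : n + 1 ≠ 0 := by omega
    have e : ((n:ℝ) + 1) = ((n + 1 : ℤ) : ℝ) := by push_cast; ring
    rw [e]
    exact_mod_cast h
  set c : ℝ := lam / (lam + mu) with hc
  set c' : ℝ := mu / (lam + mu) with hc'
  have hc0 : 0 ≤ c := div_nonneg hlam hlm.le
  have hc1 : c ≤ 1 := by rw [hc, div_le_one hlm]; linarith
  have hc'0 : 0 ≤ c' := div_nonneg hmu hlm.le
  have hc'1 : c' ≤ 1 := by rw [hc', div_le_one hlm]; linarith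
  have hsum : c + c' = 1 := by rw [hc, hc']; field_simp
  set m : ℤ := n - 1 with hmdef
  have hexp : q * ((n:ℝ) - 1) = q * ((m:ℤ):ℝ) := by push_cast [hmdef]; ring
  set s : ℝ := q * ((m:ℤ):ℝ) with hs
  rw [hexp]
  -- nonnegativity of the γ's
  have hγ1nn : 0 ≤ γ1 := by
    rw [hγ1, show 2 * lam ^ 3 / (lam + mu) ^ 2 + 2 * mu - lam
      = (lam^3 + 3*lam*mu^2 + 2*mu^3)/(lam+mu)^2 by field_simp; ring]
    positivity
  have hγ2nn : 0 ≤ γ2 := by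
    rw [hγ2, hγ1, show (lam^2+mu^2)/(2*(lam+mu)) - 1/6*(2*lam^3/(lam+mu)^2+2*mu-lam)
      = (2*lam^3 + 3*lam^2*mu + mu^3)/(6*(lam+mu)^2) by field_simp; ring]
    positivity
  have hγ3nn : 0 ≤ γ3 := by
    rw [hγ3, show 2 * mu ^ 3 / (lam + mu) ^ 2 + 2 * lam - mu
      = (mu^3 + 3*mu*lam^2 + 2*lam^3)/(lam+mu)^2 by field_simp; ring]
    positivity
  have hγ4nn : 0 ≤ γ4 := by
    rw [hγ4, hγ3, show (lam^2+mu^2)/(2*(lam+mu)) - 1/6*(2*mu^3/(lam+mu)^2+2*lam-mu)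
      = (2*mu^3 + 3*mu^2*lam + lam^3)/(6*(lam+mu)^2) by field_simp; ring]
    positivity
  have hbs : (0:ℝ) ≤ b ^ s := Real.rpow_nonneg hb.le s
  have has : (0:ℝ) ≤ a ^ s := Real.rpow_nonneg ha.le s
  have hT1nn : 0 ≤ γ1 * b ^ s + γ2 * a ^ s :=
    add_nonneg (mul_nonneg hγ1nn hbs) (mul_nonneg hγ2nn has)
  have hT2nn : 0 ≤ γ3 * a ^ s + γ4 * b ^ s :=
    add_nonneg (mul_nonneg hγ3nn has) (mul_nonneg hγ4nn hbs)
  have hKnn : (0:ℝ) ≤ (lam ^ 2 + mu ^ 2) / (2 * (lam + mu)) := by positivity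
  -- the identity
  rw [show c' = 1 - c by rw [← hsum]; ring, ident a b ha hab n hn1 c, abs_mul, abs_of_pos hba]
  set J : ℝ := ∫ t in (0:ℝ)..1, |t - c| * ((1-t)*a + t*b) ^ m with hJdef
  have hJ : |∫ t in (0:ℝ)..1, (t - c) * (n:ℝ) * (a + t*(b-a))^(n-1)| ≤ |(n:ℝ)| * J := by
    refine (intervalIntegral.abs_integral_le_integral_abs (by norm_num)).trans_eq ?_
    rw [hJdef, ← intervalIntegral.integral_const_mul]
    apply intervalIntegral.integral_congr
    intro t ht
    rw [Set.uIcc_of_le (by norm_num : (0:ℝ) ≤ 1)] at ht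
    simp only
    rw [show a + t*(b-a) = (1-t)*a + t*b by ring, abs_mul, abs_mul,
      abs_of_pos (zpow_pos (xpos' ha hb ht.1 ht.2) _)]
    ring
  have hJnn : 0 ≤ J := by
    apply intervalIntegral.integral_nonneg (by norm_num)
    intro u hu
    exact mul_nonneg (abs_nonneg _) (zpow_pos (xpos' ha hb hu.1 hu.2) _).le
  -- common facts
  have hrpow_add : ((lam+mu)) ^ ((q-1)/q) * ((lam+mu)) ^ (1/q) = lam + mu := by
    rw [← Real.rpow_add hlm, show (q-1)/q + 1/q = 1 by field_simp; ring, Real.rpow_one]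
  set K : ℝ := (lam ^ 2 + mu ^ 2) / (2 * (lam + mu)) with hK
  have hW0 : (0:ℝ) ≤ c^2 - c + 1/2 := by nlinarith [sq_nonneg (2*c - 1)]
  have hW0' : (0:ℝ) ≤ c'^2 - c' + 1/2 := by nlinarith [sq_nonneg (2*c' - 1)]
  set e : ℝ := (q-1)/q with he
  -- bound 1
  have hWK : c^2 - c + 1/2 = K/(lam+mu) := by rw [hc, hK]; field_simp; ring
  have hT1 : (c^3/3 - c/2 + 1/3) * b^s + ((c^2-c+1/2) - (c^3/3-c/2+1/3)) * a^s
      = (γ1 * b^s + γ2 * a^s)/(lam+mu) := by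
    rw [hγ2, hγ1, hc, hK]; field_simp; ring
  have bound1 : J ≤ (K/(lam+mu))^e * ((γ1 * b^s + γ2 * a^s)/(lam+mu))^(1/q) := by
    rw [← hWK, ← hT1]
    refine (stepA a b ha hb m hm q hq c hc0 hc1).trans ?_
    apply mul_le_mul_of_nonneg_left _ (Real.rpow_nonneg hW0 e)
    apply Real.rpow_le_rpow _ (stepB a b ha hb m hm q hq c hc0 hc1) (by positivity)
    apply intervalIntegral.integral_nonneg (by norm_num)
    intro u hu
    exact mul_nonneg (abs_nonneg _) (Real.rpow_nonneg (xpos' ha hb hu.1 hu.2).le _)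
  -- bound 2 via symmetry
  have hswap : J = ∫ t in (0:ℝ)..1, |t - c'| * ((1-t)*b + t*a) ^ m := by
    have h := intervalIntegral.integral_comp_sub_left
      (fun u => |u - c'| * ((1-u)*b + u*a) ^ m) 1 (a := (0:ℝ)) (b := (1:ℝ))
    norm_num at h
    rw [hJdef, ← h]
    apply intervalIntegral.integral_congr
    intro t ht
    simp only
    rw [show (1:ℝ) - t - c' = -(t - c) by rw [← hsum]; ring, abs_neg,
      show t*b + (1-t)*a = (1-t)*a + t*b by ring]
  have hWK' : c'^2 - c' + 1/2 = K/(lam+mu) := by rw [hc', hK]; field_simp; ring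
  have hT2 : (c'^3/3 - c'/2 + 1/3) * a^s + ((c'^2-c'+1/2) - (c'^3/3-c'/2+1/3)) * b^s
      = (γ3 * a^s + γ4 * b^s)/(lam+mu) := by
    rw [hγ4, hγ3, hc', hK]; field_simp; ring
  have bound2 : J ≤ (K/(lam+mu))^e * ((γ3 * a^s + γ4 * b^s)/(lam+mu))^(1/q) := by
    rw [hswap, ← hWK', ← hT2]
    refine (stepA b a hb ha m hm q hq c' hc'0 hc'1).trans ?_
    apply mul_le_mul_of_nonneg_left _ (Real.rpow_nonneg hW0' e)
    apply Real.rpow_le_rpow _ (stepB b a hb ha m hm q hq c' hc'0 hc'1) (by positivity)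
    apply intervalIntegral.integral_nonneg (by norm_num)
    intro u hu
    exact mul_nonneg (abs_nonneg _) (Real.rpow_nonneg (xpos' hb ha hu.1 hu.2).le _)
  -- assemble
  have hfix : ∀ T : ℝ, 0 ≤ T →
      (b-a) * (|(n:ℝ)| * ((K/(lam+mu))^e * (T/(lam+mu))^(1/q)))
        = ((b-a)/(lam+mu)) * K^e * |(n:ℝ)| * T^(1/q) := by
    intro T hT
    rw [Real.div_rpow hKnn hlm.le, Real.div_rpow hT hlm.le, div_mul_div_comm, hrpow_add]
    ring
  calc (b - a) * |∫ t in (0:ℝ)..1, (t - c) * (n:ℝ) * (a + t*(b-a))^(n-1)|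
      ≤ (b - a) * (|(n:ℝ)| * J) := mul_le_mul_of_nonneg_left hJ hba.le
    _ ≤ min (((b-a)/(lam+mu)) * K^e * |(n:ℝ)| * (γ1 * b^s + γ2 * a^s)^(1/q))
          (((b-a)/(lam+mu)) * K^e * |(n:ℝ)| * (γ3 * a^s + γ4 * b^s)^(1/q)) := by
        refine le_min ?_ ?_
        · rw [← hfix _ hT1nn]
          exact mul_le_mul_of_nonneg_left
            (mul_le_mul_of_nonneg_left bound1 (abs_nonneg _)) hba.le
        · rw [← hfix _ hT2nn]
          exact mul_le_mul_of_nonneg_left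
            (mul_le_mul_of_nonneg_left bound2 (abs_nonneg _)) hba.le
    _ = ((b-a)/(lam+mu)) * K^e * |(n:ℝ)| *
          min ((γ1 * b^s + γ2 * a^s)^(1/q)) ((γ3 * a^s + γ4 * b^s)^(1/q)) := by
        rw [mul_min_of_nonneg]
        positivity
end

section
/- Let 0 < a < b and let n ∈ ℤ with |n| ≥ 2. For λ, μ ∈ [0,∞) with λ + μ > 0 and q > 1 with 1/p + 1/q = 1, set M₁ = A(a^{(n−1)q}, A_{λ/(λ+μ)}(b,a)^{(n−1)q}) and M₂ = A(b^{(n−1)q}, A_{λ/(λ+μ)}(b,a)^{(n−1)q}). Then |A_{λ/(λ+μ)}(aⁿ, bⁿ) − Lₙⁿ(a,b)| ≤ ((b−a)/(λ+μ)²) · (1/(p+1))^{1/p} · |n| · [λ² M₁^{1/q} + μ² M₂^{1/q}]. -/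
open Set MeasureTheory intervalIntegral

lemma aux_convexOn_rpow (s : ℝ) (hs : s ≤ 0 ∨ 1 ≤ s) :
    ConvexOn ℝ (Set.Ioi (0:ℝ)) (fun u : ℝ => u ^ s) := by
  have hint : interior (Set.Ioi (0:ℝ)) = Set.Ioi 0 := interior_Ioi
  refine convexOn_of_hasDerivWithinAt2_nonneg (f' := fun u => s * u ^ (s - 1))
    (f'' := fun u => s * ((s - 1) * u ^ (s - 2))) (convex_Ioi 0) ?_ ?_ ?_ ?_
  · exact fun u hu => (Real.continuousAt_rpow_const u s
      (Or.inl (ne_of_gt hu))).continuousWithinAt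
  · intro u hu
    rw [hint] at hu ⊢
    exact (Real.hasDerivAt_rpow_const (Or.inl (ne_of_gt hu))).hasDerivWithinAt
  · intro u hu
    rw [hint] at hu ⊢
    have h := ((Real.hasDerivAt_rpow_const (x := u) (p := s - 1)
      (Or.inl (ne_of_gt hu))).const_mul s).hasDerivWithinAt (s := Set.Ioi (0:ℝ))
    rw [show s - 2 = s - 1 - 1 by ring]
    exact h
  · intro u hu
    rw [hint] at hu
    have hu2 : (0:ℝ) ≤ u ^ (s - 2) := Real.rpow_nonneg (le_of_lt hu) _
    rcases hs with hs | hs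
    · have : 0 ≤ s * (s - 1) := by nlinarith
      calc (0:ℝ) ≤ s * (s-1) * u ^ (s-2) := mul_nonneg this hu2
        _ = s * ((s-1) * u ^ (s-2)) := by ring
    · have : 0 ≤ s * (s - 1) := mul_nonneg (by linarith) (by linarith)
      calc (0:ℝ) ≤ s * (s-1) * u ^ (s-2) := mul_nonneg this hu2
        _ = s * ((s-1) * u ^ (s-2)) := by ring

lemma aux_trap (s c d : ℝ) (hc : 0 < c) (hcd : c ≤ d) (hs : s ≤ 0 ∨ 1 ≤ s) :
    ∫ u in c..d, u ^ s ≤ (d - c) * ((c ^ s + d ^ s) / 2) := by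
  rcases eq_or_lt_of_le hcd with rfl | hlt
  · simp
  have hd : 0 < d := lt_trans hc hlt
  have hdc : 0 < d - c := sub_pos.mpr hlt
  set A := (d * c ^ s - c * d ^ s) / (d - c) with hA
  set B := (d ^ s - c ^ s) / (d - c) with hB
  have hpt : ∀ u ∈ Icc c d, u ^ s ≤ A + B * u := by
    intro u hu
    have h1 : (0:ℝ) ≤ (d - u) / (d - c) := div_nonneg (by linarith [hu.2]) hdc.le
    have h2 : (0:ℝ) ≤ (u - c) / (d - c) := div_nonneg (by linarith [hu.1]) hdc.le
    have h3 : (d - u) / (d - c) + (u - c) / (d - c) = 1 := by field_simp; ring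
    have hcv := (aux_convexOn_rpow s hs).2 (Set.mem_Ioi.mpr hc) (Set.mem_Ioi.mpr hd) h1 h2 h3
    simp only [smul_eq_mul] at hcv
    have hcomb : (d - u) / (d - c) * c + (u - c) / (d - c) * d = u := by
      field_simp
      ring
    rw [hcomb] at hcv
    calc u ^ s ≤ (d - u) / (d - c) * c ^ s + (u - c) / (d - c) * d ^ s := hcv
      _ = A + B * u := by rw [hA, hB]; field_simp; ring
  have hint1 : IntervalIntegrable (fun u : ℝ => u ^ s) volume c d := by
    apply ContinuousOn.intervalIntegrable
    apply ContinuousOn.rpow_const continuousOn_id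
    intro x hx
    rw [Set.uIcc_of_le hcd] at hx
    exact Or.inl (ne_of_gt (lt_of_lt_of_le hc hx.1))
  have hint2 : IntervalIntegrable (fun u : ℝ => A + B * u) volume c d :=
    (continuous_const.add (continuous_const.mul continuous_id)).intervalIntegrable c d
  calc ∫ u in c..d, u ^ s ≤ ∫ u in c..d, (A + B * u) :=
        intervalIntegral.integral_mono_on hcd hint1 hint2 hpt
    _ = A * (d - c) + B * ((d ^ 2 - c ^ 2) / 2) := by
        rw [intervalIntegral.integral_add (intervalIntegrable_const)
          ((intervalIntegral.intervalIntegrable_id).const_mul B),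
          intervalIntegral.integral_const, intervalIntegral.integral_const_mul,
          integral_id]
        simp [mul_comm]
    _ = (d - c) * ((c ^ s + d ^ s) / 2) := by rw [hA, hB]; field_simp; ring

lemma aux_memLp (c d : ℝ) (r : ℝ) (f : ℝ → ℝ)
    (hf : ContinuousOn f (Icc c d)) :
    MemLp f (ENNReal.ofReal r) (volume.restrict (Ioc c d)) := by
  haveI : IsFiniteMeasure (volume.restrict (Ioc c d)) :=
    ⟨by rw [Measure.restrict_apply_univ]; exact measure_Ioc_lt_top⟩
  obtain ⟨C, hC⟩ := (isCompact_Icc (a := c) (b := d)).exists_bound_of_continuousOn hf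
  refine MemLp.of_bound
    ((hf.mono Ioc_subset_Icc_self).aestronglyMeasurable measurableSet_Ioc) C ?_
  exact (ae_restrict_iff' measurableSet_Ioc).mpr
    (ae_of_all _ fun x hx => hC x (Ioc_subset_Icc_self hx))

lemma aux_holder (c d : ℝ) (hcd : c ≤ d) (p q : ℝ) (hpq : Real.HolderConjugate p q)
    (w g : ℝ → ℝ) (hw : ContinuousOn w (Icc c d)) (hg : ContinuousOn g (Icc c d))
    (hw0 : ∀ u ∈ Icc c d, 0 ≤ w u) (hg0 : ∀ u ∈ Icc c d, 0 ≤ g u) :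
    ∫ u in c..d, w u * g u ≤
      (∫ u in c..d, w u ^ p) ^ (1 / p) * (∫ u in c..d, g u ^ q) ^ (1 / q) := by
  rw [intervalIntegral.integral_of_le hcd, intervalIntegral.integral_of_le hcd,
    intervalIntegral.integral_of_le hcd]
  refine integral_mul_le_Lp_mul_Lq_of_nonneg hpq ?_ ?_ ?_ ?_
  · exact (ae_restrict_iff' measurableSet_Ioc).mpr
      (ae_of_all _ fun x hx => hw0 x (Ioc_subset_Icc_self hx))
  · exact (ae_restrict_iff' measurableSet_Ioc).mpr
      (ae_of_all _ fun x hx => hg0 x (Ioc_subset_Icc_self hx))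
  · exact aux_memLp c d p w hw
  · exact aux_memLp c d q g hg

lemma aux_piece (c d : ℝ) (hc : 0 < c) (hcd : c ≤ d) (n : ℤ) (hn : 2 ≤ |n|)
    (p q : ℝ) (hq : 1 < q) (hpq : Real.HolderConjugate p q)
    (k : ℝ → ℝ) (hk : Continuous k) (hk0 : ∀ u ∈ Icc c d, 0 ≤ k u)
    (hkint : ∫ u in c..d, k u ^ p = (d - c) ^ (p + 1) / (p + 1)) :
    ∫ u in c..d, k u * (|(n:ℝ)| * u ^ ((n:ℝ) - 1)) ≤
      (d - c) ^ 2 * (1 / (p + 1)) ^ (1 / p) * |(n:ℝ)| *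
        ((c ^ (((n:ℝ) - 1) * q) + d ^ (((n:ℝ) - 1) * q)) / 2) ^ (1 / q) := by
  have hp1 : 1 < p := hpq.lt
  have hp0 : (0:ℝ) < p := hpq.pos
  have hq0 : (0:ℝ) < q := by linarith
  have hp1' : (0:ℝ) < p + 1 := by linarith
  set r : ℝ := (n:ℝ) - 1 with hr
  set s : ℝ := r * q with hsdef
  set M : ℝ := (c ^ s + d ^ s) / 2 with hM
  have hd : (0:ℝ) < d := lt_of_lt_of_le hc hcd
  have hM0 : (0:ℝ) ≤ M := by
    rw [hM]
    have := Real.rpow_nonneg hc.le s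
    have := Real.rpow_nonneg hd.le s
    linarith
  have hs : s ≤ 0 ∨ 1 ≤ s := by
    rcases le_abs.mp hn with h | h
    · right
      have h2 : (2:ℝ) ≤ (n:ℝ) := by exact_mod_cast h
      have : (1:ℝ) ≤ r := by rw [hr]; linarith
      nlinarith
    · left
      have h2 : (2:ℝ) ≤ -(n:ℝ) := by exact_mod_cast h
      have : r ≤ 0 := by rw [hr]; linarith
      nlinarith
  rcases eq_or_lt_of_le hcd with rfl | hlt
  · simp
  have hdc : (0:ℝ) < d - c := sub_pos.mpr hlt
  set g : ℝ → ℝ := fun u => |(n:ℝ)| * u ^ r with hg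
  have hgc : ContinuousOn g (Icc c d) := by
    apply continuousOn_const.mul
    exact ContinuousOn.rpow_const continuousOn_id
      (fun x hx => Or.inl (ne_of_gt (lt_of_lt_of_le hc hx.1)))
  have hg0 : ∀ u ∈ Icc c d, 0 ≤ g u := fun u hu =>
    mul_nonneg (abs_nonneg _) (Real.rpow_nonneg (le_of_lt (lt_of_lt_of_le hc hu.1)) _)
  have step1 := aux_holder c d hcd p q hpq k g hk.continuousOn hgc hk0 hg0
  have e1 : (∫ u in c..d, g u ^ q) = |(n:ℝ)| ^ q * ∫ u in c..d, u ^ s := by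
    rw [← intervalIntegral.integral_const_mul]
    apply intervalIntegral.integral_congr
    intro u hu
    rw [Set.uIcc_of_le hcd] at hu
    have hu0 : (0:ℝ) < u := lt_of_lt_of_le hc hu.1
    rw [hg]
    simp only []
    rw [Real.mul_rpow (abs_nonneg _) (Real.rpow_nonneg hu0.le _),
      hsdef, Real.rpow_mul hu0.le]
  have hpos : 0 ≤ ∫ u in c..d, u ^ s :=
    intervalIntegral.integral_nonneg hcd
      (fun u hu => Real.rpow_nonneg (le_of_lt (lt_of_lt_of_le hc hu.1)) _)
  have htrap : (∫ u in c..d, u ^ s) ≤ (d - c) * M := aux_trap s c d hc hcd hs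
  have habs : (0:ℝ) ≤ |(n:ℝ)| := abs_nonneg _
  have e2 : (|(n:ℝ)| ^ q * ((d - c) * M)) ^ (1/q)
      = |(n:ℝ)| * ((d - c) ^ (1/q) * M ^ (1/q)) := by
    rw [Real.mul_rpow (Real.rpow_nonneg habs q) (mul_nonneg hdc.le hM0),
      Real.mul_rpow hdc.le hM0, ← Real.rpow_mul habs,
      mul_one_div_cancel (ne_of_gt hq0), Real.rpow_one]
  have e3 : ((d - c) ^ (p + 1) / (p + 1)) ^ (1/p)
      = (d - c) ^ ((p + 1) * (1/p)) * (1 / (p + 1)) ^ (1/p) := by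
    rw [div_eq_mul_one_div, Real.mul_rpow (Real.rpow_nonneg hdc.le _) (by positivity),
      ← Real.rpow_mul hdc.le]
  have e4 : (d - c) ^ ((p + 1) * (1/p)) * (d - c) ^ (1/q) = (d - c) ^ 2 := by
    rw [← Real.rpow_add hdc]
    have hexp : (p + 1) * (1/p) + 1/q = 2 := by
      have h := hpq.inv_add_inv_eq_one
      rw [inv_eq_one_div, inv_eq_one_div] at h
      have h1 : (p + 1) * (1/p) = 1 + 1/p := by field_simp
      linarith
    rw [hexp, show (2:ℝ) = ((2:ℕ):ℝ) by norm_num, Real.rpow_natCast]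
  calc ∫ u in c..d, k u * g u
      ≤ (∫ u in c..d, k u ^ p) ^ (1/p) * (∫ u in c..d, g u ^ q) ^ (1/q) := step1
    _ = ((d - c) ^ (p + 1) / (p + 1)) ^ (1/p) * (|(n:ℝ)| ^ q * ∫ u in c..d, u ^ s) ^ (1/q) := by
        rw [hkint, e1]
    _ ≤ ((d - c) ^ (p + 1) / (p + 1)) ^ (1/p) * (|(n:ℝ)| ^ q * ((d - c) * M)) ^ (1/q) := by
        apply mul_le_mul_of_nonneg_left _ (Real.rpow_nonneg (by positivity) _)
        apply Real.rpow_le_rpow (mul_nonneg (Real.rpow_nonneg habs q) hpos)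
          (mul_le_mul_of_nonneg_left htrap (Real.rpow_nonneg habs q)) (by positivity)
    _ = ((d - c) ^ ((p + 1) * (1/p)) * (d - c) ^ (1/q)) *
          ((1 / (p + 1)) ^ (1/p) * (|(n:ℝ)| * M ^ (1/q))) := by
        rw [e3, e2]; ring
    _ = (d - c) ^ 2 * (1 / (p + 1)) ^ (1/p) * |(n:ℝ)| * M ^ (1/q) := by
        rw [e4]; ring

/-- Proposition 3.2 of the paper: application to special means, where
`A(x,y) = (x+y)/2`, `A_{λ/(λ+μ)}(b,a) = (λb+μa)/(λ+μ)` and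
`Lₙⁿ(a,b) = (b^{n+1} - a^{n+1})/((n+1)(b-a))`. -/
theorem stmt_11 (a b : ℝ) (ha : 0 < a) (hab : a < b)
    (n : ℤ) (hn : 2 ≤ |n|)
    (lam mu : ℝ) (hlam : 0 ≤ lam) (hmu : 0 ≤ mu) (hlm : 0 < lam + mu)
    (p q : ℝ) (hq : 1 < q) (hpq : 1 / p + 1 / q = 1)
    (M1 M2 : ℝ)
    (hM1 : M1 = (a ^ (((n : ℝ) - 1) * q) +
      ((lam * b + mu * a) / (lam + mu)) ^ (((n : ℝ) - 1) * q)) / 2)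
    (hM2 : M2 = (b ^ (((n : ℝ) - 1) * q) +
      ((lam * b + mu * a) / (lam + mu)) ^ (((n : ℝ) - 1) * q)) / 2) :
    |(lam / (lam + mu)) * a ^ n + (mu / (lam + mu)) * b ^ n -
        (b ^ (n + 1) - a ^ (n + 1)) / (((n : ℝ) + 1) * (b - a))| ≤
      ((b - a) / (lam + mu) ^ 2) * (1 / (p + 1)) ^ (1 / p) * |(n : ℝ)| *
        (lam ^ 2 * M1 ^ (1 / q) + mu ^ 2 * M2 ^ (1 / q)) := by
  have hb : (0:ℝ) < b := lt_trans ha hab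
  have hba : (0:ℝ) < b - a := sub_pos.mpr hab
  have hlm' : lam + mu ≠ 0 := ne_of_gt hlm
  set x : ℝ := (lam * b + mu * a) / (lam + mu) with hx
  have hax : a ≤ x := by
    rw [hx, le_div_iff₀ hlm]; nlinarith
  have hxb : x ≤ b := by
    rw [hx, div_le_iff₀ hlm]; nlinarith
  have hx0 : (0:ℝ) < x := lt_of_lt_of_le ha hax
  -- conjugate exponents
  have hq0 : (0:ℝ) < q := by linarith
  have h1p : 1/p = 1 - 1/q := by linarith
  have hqinv : 1/q < 1 := by rw [div_lt_one hq0]; exact hq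
  have hpinv : 0 < 1/p := by rw [h1p]; linarith
  have hp0 : (0:ℝ) < p := by
    rcases lt_trichotomy p 0 with h | h | h
    · exfalso; have : 1/p < 0 := div_neg_of_pos_of_neg one_pos h; linarith
    · exfalso; rw [h] at hpinv; simp at hpinv
    · exact h
  have hp1 : 1 < p := by
    have h01q : (0:ℝ) < 1/q := by positivity
    have hlt : 1/p < 1 := by rw [h1p]; linarith
    exact (div_lt_one hp0).mp hlt
  have hpq' : Real.HolderConjugate p q :=
    Real.holderConjugate_iff.mpr ⟨hp1, by rw [inv_eq_one_div, inv_eq_one_div]; exact hpq⟩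
  -- integer facts
  have hncase : 2 ≤ n ∨ 2 ≤ -n := le_abs.mp hn
  have hn0 : n ≠ 0 := by omega
  have hnm1 : n ≠ -1 := by omega
  have hnR0 : ((n:ℝ)) ≠ 0 := Int.cast_ne_zero.mpr hn0
  have hnR1 : ((n:ℝ)) + 1 ≠ 0 := by
    intro h
    have : ((n:ℝ)) = -1 := by linarith
    exact hnm1 (by exact_mod_cast this)
  have h0ab : (0:ℝ) ∉ Set.uIcc a b := by
    rw [Set.uIcc_of_le hab.le]; intro h; exact absurd h.1 (not_le.mpr ha)
  -- the kernel function
  set F : ℝ → ℝ := fun u => (u - x) * ((n:ℝ) * u ^ (n - 1 : ℤ)) with hF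
  have hFcont : ContinuousOn F (Set.Icc a b) := by
    apply ContinuousOn.mul (continuousOn_id.sub continuousOn_const)
    apply continuousOn_const.mul
    intro u hu
    exact (continuousAt_zpow₀ u _ (Or.inl (ne_of_gt (lt_of_lt_of_le ha hu.1)))).continuousWithinAt
  have hFint1 : IntervalIntegrable F volume a x :=
    (hFcont.mono (by rw [Set.uIcc_of_le hax]; exact Set.Icc_subset_Icc le_rfl hxb)).intervalIntegrable
  have hFint2 : IntervalIntegrable F volume x b :=
    (hFcont.mono (by rw [Set.uIcc_of_le hxb]; exact Set.Icc_subset_Icc hax le_rfl)).intervalIntegrable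
  -- closed form of the full integral
  have hI : ∫ u in a..b, F u
      = (n:ℝ) * ((b ^ (n+1 : ℤ) - a ^ (n+1 : ℤ)) / ((n:ℝ) + 1))
        - (x * (n:ℝ)) * ((b ^ (n : ℤ) - a ^ (n : ℤ)) / (n:ℝ)) := by
    have hEq : Set.EqOn F
        (fun u => (n:ℝ) * u ^ (n : ℤ) - (x * (n:ℝ)) * u ^ (n - 1 : ℤ)) (Set.uIcc a b) := by
      intro u hu
      rw [Set.uIcc_of_le hab.le] at hu
      have hu0 : u ≠ 0 := ne_of_gt (lt_of_lt_of_le ha hu.1)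
      have hzz : u ^ (n : ℤ) = u ^ (n - 1 : ℤ) * u := by
        rw [← zpow_add_one₀ hu0]; norm_num
      rw [hF]; simp only []
      rw [hzz]; ring
    rw [intervalIntegral.integral_congr hEq,
      intervalIntegral.integral_sub ((intervalIntegrable_zpow (Or.inr h0ab)).const_mul _)
        ((intervalIntegrable_zpow (Or.inr h0ab)).const_mul _),
      intervalIntegral.integral_const_mul, intervalIntegral.integral_const_mul,
      integral_zpow (Or.inr ⟨hnm1, h0ab⟩),
      integral_zpow (Or.inr ⟨by omega, h0ab⟩)]
    have : ((n:ℤ) - 1 + 1) = n := by ring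
    rw [this]
    push_cast
    ring_nf
  -- the identity
  have hA : a ^ (n + 1 : ℤ) = a ^ (n : ℤ) * a := zpow_add_one₀ (ne_of_gt ha) n
  have hB : b ^ (n + 1 : ℤ) = b ^ (n : ℤ) * b := zpow_add_one₀ (ne_of_gt hb) n
  have hIdent : (lam / (lam + mu)) * a ^ (n : ℤ) + (mu / (lam + mu)) * b ^ (n : ℤ) -
      (b ^ (n+1 : ℤ) - a ^ (n+1 : ℤ)) / (((n : ℝ) + 1) * (b - a))
      = (1 / (b - a)) * ∫ u in a..b, F u := by
    rw [hI, hx, hA, hB]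
    field_simp
    ring
  -- piece bounds
  have habs1 : |∫ u in a..x, F u| ≤ ∫ u in a..x, (x - u) * (|(n:ℝ)| * u ^ ((n:ℝ) - 1)) := by
    refine (intervalIntegral.abs_integral_le_integral_abs hax).trans_eq ?_
    apply intervalIntegral.integral_congr
    intro u hu
    rw [Set.uIcc_of_le hax] at hu
    have hu0 : (0:ℝ) < u := lt_of_lt_of_le ha hu.1
    have hz : (0:ℝ) < u ^ (n - 1 : ℤ) := zpow_pos hu0 _
    rw [hF]; simp only []
    rw [abs_mul, abs_mul, abs_of_nonpos (by linarith [hu.2] : u - x ≤ 0), abs_of_pos hz,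
      ← Real.rpow_intCast u (n - 1)]
    push_cast
    ring
  have habs2 : |∫ u in x..b, F u| ≤ ∫ u in x..b, (u - x) * (|(n:ℝ)| * u ^ ((n:ℝ) - 1)) := by
    refine (intervalIntegral.abs_integral_le_integral_abs hxb).trans_eq ?_
    apply intervalIntegral.integral_congr
    intro u hu
    rw [Set.uIcc_of_le hxb] at hu
    have hu0 : (0:ℝ) < u := lt_of_lt_of_le hx0 hu.1
    have hz : (0:ℝ) < u ^ (n - 1 : ℤ) := zpow_pos hu0 _
    rw [hF]; simp only []
    rw [abs_mul, abs_mul, abs_of_nonneg (by linarith [hu.1] : (0:ℝ) ≤ u - x), abs_of_pos hz,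
      ← Real.rpow_intCast u (n - 1)]
    push_cast
    ring
  have hp1' : (0:ℝ) < p + 1 := by linarith
  have hk1 : ∫ u in a..x, (x - u) ^ p = (x - a) ^ (p + 1) / (p + 1) := by
    rw [intervalIntegral.integral_comp_sub_left (fun t : ℝ => t ^ p) x, sub_self,
      integral_rpow (Or.inl (by linarith : (-1:ℝ) < p)),
      Real.zero_rpow (ne_of_gt hp1')]
    ring
  have hk2 : ∫ u in x..b, (u - x) ^ p = (b - x) ^ (p + 1) / (p + 1) := by
    rw [intervalIntegral.integral_comp_sub_right (fun t : ℝ => t ^ p) x, sub_self,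
      integral_rpow (Or.inl (by linarith : (-1:ℝ) < p)),
      Real.zero_rpow (ne_of_gt hp1')]
    ring
  have piece1 := aux_piece a x ha hax n hn p q hq hpq' (fun u => x - u)
    (continuous_const.sub continuous_id) (fun u hu => by show (0:ℝ) ≤ x - u; linarith [hu.2]) hk1
  have piece2 := aux_piece x b hx0 hxb n hn p q hq hpq' (fun u => u - x)
    (continuous_id.sub continuous_const) (fun u hu => by show (0:ℝ) ≤ u - x; linarith [hu.1]) hk2
  have hP1 : |∫ u in a..x, F u| ≤
      (x - a) ^ 2 * (1 / (p + 1)) ^ (1 / p) * |(n:ℝ)| * M1 ^ (1 / q) := by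
    rw [hM1]; exact habs1.trans piece1
  have hP2 : |∫ u in x..b, F u| ≤
      (b - x) ^ 2 * (1 / (p + 1)) ^ (1 / p) * |(n:ℝ)| * M2 ^ (1 / q) := by
    rw [hM2, add_comm (b ^ (((n:ℝ) - 1) * q))]; exact habs2.trans piece2
  have hsplit : ∫ u in a..b, F u = (∫ u in a..x, F u) + ∫ u in x..b, F u :=
    (intervalIntegral.integral_add_adjacent_intervals hFint1 hFint2).symm
  calc |(lam / (lam + mu)) * a ^ (n:ℤ) + (mu / (lam + mu)) * b ^ (n:ℤ) -
        (b ^ (n + 1:ℤ) - a ^ (n + 1:ℤ)) / (((n : ℝ) + 1) * (b - a))|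
      = |(1 / (b - a)) * ∫ u in a..b, F u| := by rw [hIdent]
    _ = (1 / (b - a)) * |∫ u in a..b, F u| := by
        rw [abs_mul, abs_of_pos (one_div_pos.mpr hba)]
    _ ≤ (1 / (b - a)) * ((x - a) ^ 2 * (1 / (p + 1)) ^ (1 / p) * |(n:ℝ)| * M1 ^ (1 / q)
          + (b - x) ^ 2 * (1 / (p + 1)) ^ (1 / p) * |(n:ℝ)| * M2 ^ (1 / q)) := by
        apply mul_le_mul_of_nonneg_left _ (le_of_lt (one_div_pos.mpr hba))
        rw [hsplit]
        exact (abs_add_le _ _).trans (add_le_add hP1 hP2)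
    _ = ((b - a) / (lam + mu) ^ 2) * (1 / (p + 1)) ^ (1 / p) * |(n : ℝ)| *
        (lam ^ 2 * M1 ^ (1 / q) + mu ^ 2 * M2 ^ (1 / q)) := by
        have e1 : x - a = lam * (b - a) / (lam + mu) := by rw [hx]; field_simp; ring
        have e2 : b - x = mu * (b - a) / (lam + mu) := by rw [hx]; field_simp; ring
        rw [e1, e2]
        field_simp
end

section
/- Let 0 < a < b and let n ∈ ℤ with |n| ≥ 2. For λ, μ ∈ [0,∞) with λ + μ > 0 and q > 1 with 1/p + 1/q = 1, |A_{λ/(λ+μ)}(aⁿ, bⁿ) − Lₙⁿ(a,b)| ≤ ((b−a)/(λ+μ)) · ((λ^{p+1} + μ^{p+1})/(λ+μ))^{1/p} · (1/(p+1))^{1/p} · |n| · A(a^{(n−1)q}, b^{(n−1)q})^{1/q}. -/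
open MeasureTheory Set intervalIntegral


private lemma aux_conj {p q : ℝ} (hq : 1 < q) (hpq : 1 / p + 1 / q = 1) :
    Real.HolderConjugate p q := by
  have hq0 : 0 < q := lt_trans one_pos hq
  have h1 : (0:ℝ) < 1 / p := by
    have : 1 / q < 1 := by rw [div_lt_one hq0]; exact hq
    linarith
  have hp0 : 0 < p := one_div_pos.mp h1
  have hp1 : 1 < p := by
    have h2 : 1 / p < 1 := by
      have : 0 < 1 / q := by positivity
      linarith
    rwa [div_lt_one hp0] at h2
  exact Real.holderConjugate_iff.mpr ⟨hp1, by rw [← one_div, ← one_div]; exact hpq⟩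

private lemma aux_combo (m : ℤ) {q : ℝ} (hq : 1 ≤ q) {x y t : ℝ} (hx : 0 < x) (hy : 0 < y)
    (ht0 : 0 ≤ t) (ht1 : t ≤ 1) :
    (t * x + (1 - t) * y) ^ ((m : ℝ) * q) ≤
      t * x ^ ((m : ℝ) * q) + (1 - t) * y ^ ((m : ℝ) * q) := by
  have ht1' : 0 ≤ 1 - t := by linarith
  have hz : 0 < t * x + (1 - t) * y := by
    rcases lt_or_eq_of_le ht1 with h | h
    · have h2 : 0 < (1 - t) * y := mul_pos (by linarith) hy
      nlinarith [mul_nonneg ht0 hx.le]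
    · simp only [h]; norm_num; exact hx
  have hq0 : 0 ≤ q := le_trans zero_le_one hq
  have h1 : (t * x + (1 - t) * y) ^ m ≤ t * x ^ m + (1 - t) * y ^ m := by
    have := (convexOn_zpow (𝕜 := ℝ) m).2 (mem_Ioi.mpr hx) (mem_Ioi.mpr hy) ht0 ht1'
      (by ring)
    simpa [smul_eq_mul] using this
  have hzm : (0:ℝ) ≤ (t * x + (1 - t) * y) ^ m := le_of_lt (zpow_pos hz m)
  have h2 : ((t * x + (1 - t) * y) ^ m) ^ q ≤ (t * x ^ m + (1 - t) * y ^ m) ^ q :=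
    Real.rpow_le_rpow hzm h1 hq0
  have h3 : (t * x ^ m + (1 - t) * y ^ m) ^ q ≤ t * (x ^ m) ^ q + (1 - t) * (y ^ m) ^ q := by
    have := (convexOn_rpow hq).2 (mem_Ici.mpr (le_of_lt (zpow_pos hx m)))
      (mem_Ici.mpr (le_of_lt (zpow_pos hy m))) ht0 ht1' (by ring)
    simpa [smul_eq_mul] using this
  have key : ∀ z : ℝ, 0 < z → z ^ ((m : ℝ) * q) = (z ^ m) ^ q := by
    intro z hz
    rw [Real.rpow_mul hz.le, Real.rpow_intCast]
  rw [key _ hz, key _ hx, key _ hy]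
  exact le_trans h2 h3

private lemma aux_moment {p : ℝ} (hp : 0 < p) {c : ℝ} (hc0 : 0 ≤ c) (hc1 : c ≤ 1) :
    ∫ t in (0:ℝ)..1, |t - c| ^ p = (c ^ (p + 1) + (1 - c) ^ (p + 1)) / (p + 1) := by
  have hp1 : p + 1 ≠ 0 := by positivity
  have h1 : ∫ t in (0:ℝ)..c, |t - c| ^ p = c ^ (p + 1) / (p + 1) := by
    have hcongr : ∫ t in (0:ℝ)..c, |t - c| ^ p = ∫ t in (0:ℝ)..c, (c - t) ^ p := by
      apply intervalIntegral.integral_congr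
      intro t ht
      rw [uIcc_of_le hc0] at ht
      show |t - c| ^ p = (c - t) ^ p
      rw [abs_of_nonpos (by linarith [ht.2])]
      ring_nf
    rw [hcongr, intervalIntegral.integral_comp_sub_left (fun x => x ^ p) c]
    simp only [sub_self, sub_zero]
    rw [integral_rpow (Or.inl (by linarith))]
    rw [Real.zero_rpow hp1]
    ring
  have h2 : ∫ t in c..(1:ℝ), |t - c| ^ p = (1 - c) ^ (p + 1) / (p + 1) := by
    have hcongr : ∫ t in c..(1:ℝ), |t - c| ^ p = ∫ t in c..(1:ℝ), (t - c) ^ p := by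
      apply intervalIntegral.integral_congr
      intro t ht
      rw [uIcc_of_le hc1] at ht
      show |t - c| ^ p = (t - c) ^ p
      rw [abs_of_nonneg (by linarith [ht.1])]
    rw [hcongr, intervalIntegral.integral_comp_sub_right (fun x => x ^ p) c]
    simp only [sub_self]
    rw [integral_rpow (Or.inl (by linarith))]
    rw [Real.zero_rpow hp1]
    ring
  rw [← intervalIntegral.integral_add_adjacent_intervals (b := c)
    (f := fun t => |t - c| ^ p) ?_ ?_, h1, h2]
  · ring
  · apply ContinuousOn.intervalIntegrable
    apply ContinuousOn.rpow_const (by fun_prop)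
    intro x _; exact Or.inr hp.le
  · apply ContinuousOn.intervalIntegrable
    apply ContinuousOn.rpow_const (by fun_prop)
    intro x _; exact Or.inr hp.le

private lemma aux_identity (a b : ℝ) (ha : 0 < a) (hab : a < b) (n : ℤ)
    (hn1 : (n : ℝ) + 1 ≠ 0) (c : ℝ) :
    (1 - c) * a ^ n + c * b ^ n - (b ^ (n + 1) - a ^ (n + 1)) / (((n : ℝ) + 1) * (b - a)) =
      ∫ t in (0:ℝ)..1, (t - c) * (a - b) * (n : ℝ) * (t * a + (1 - t) * b) ^ (n - 1) := by
  have hba : b - a ≠ 0 := by linarith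
  have hab' : a - b ≠ 0 := by linarith
  set v : ℝ → ℝ := fun t => t * a + (1 - t) * b with hv
  have hvpos : ∀ t ∈ uIcc (0:ℝ) 1, 0 < v t := by
    intro t ht
    rw [uIcc_of_le zero_le_one] at ht
    have h1 : v t - a = (1 - t) * (b - a) := by simp only [hv]; ring
    nlinarith [mul_nonneg (by linarith [ht.2] : (0:ℝ) ≤ 1 - t) (by linarith : (0:ℝ) ≤ b - a)]
  set H : ℝ → ℝ := fun t => (t - c) * v t ^ n - v t ^ (n + 1) / (((n : ℝ) + 1) * (a - b))
    with hH
  have hderiv : ∀ t ∈ uIcc (0:ℝ) 1,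
      HasDerivAt H ((t - c) * (a - b) * (n : ℝ) * v t ^ (n - 1)) t := by
    intro t ht
    have hvne : v t ≠ 0 := ne_of_gt (hvpos t ht)
    have hvd : HasDerivAt v (a - b) t := by
      have : HasDerivAt (fun t : ℝ => t * a + (1 - t) * b) (1 * a + (0 - 1) * b) t :=
        ((hasDerivAt_id t).mul_const a).add
          (((hasDerivAt_const t (1:ℝ)).sub (hasDerivAt_id t)).mul_const b)
      simpa using this.congr_deriv (by ring)
    have h1 : HasDerivAt (fun t => v t ^ n) ((n : ℝ) * v t ^ (n - 1) * (a - b)) t :=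
      (hasDerivAt_zpow n (v t) (Or.inl hvne)).comp t hvd
    have h2 : HasDerivAt (fun t => (t - c) * v t ^ n)
        (1 * v t ^ n + (t - c) * ((n : ℝ) * v t ^ (n - 1) * (a - b))) t :=
      ((hasDerivAt_id t).sub_const c).mul h1
    have h3 : HasDerivAt (fun t => v t ^ (n + 1) / (((n : ℝ) + 1) * (a - b)))
        ((((n : ℝ) + 1) * v t ^ n * (a - b)) / (((n : ℝ) + 1) * (a - b))) t := by
      have h4 : HasDerivAt (fun t => v t ^ (n + 1)) (((n : ℝ) + 1) * v t ^ n * (a - b)) t := by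
        have := (hasDerivAt_zpow (n + 1) (v t) (Or.inl hvne)).comp t hvd
        simpa [add_sub_cancel_right, Function.comp_def] using this.congr_deriv (by push_cast; ring)
      exact h4.div_const _
    have h5 := h2.sub h3
    apply h5.congr_deriv
    have hcancel : ((n:ℝ) + 1) * v t ^ n * (a - b) / (((n:ℝ) + 1) * (a - b)) = v t ^ n := by
      rw [div_eq_iff (mul_ne_zero hn1 hab')]; ring
    rw [hcancel]; ring
  have hint : IntervalIntegrable
      (fun t => (t - c) * (a - b) * (n : ℝ) * v t ^ (n - 1)) volume 0 1 := by
    apply ContinuousOn.intervalIntegrable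
    apply ContinuousOn.mul (by fun_prop)
    exact (by fun_prop : Continuous v).continuousOn.zpow₀ _
      (fun t ht => Or.inl (ne_of_gt (hvpos t ht)))
  rw [intervalIntegral.integral_eq_sub_of_hasDerivAt hderiv hint]
  have hv1 : v 1 = a := by simp [hv]
  have hv0 : v 0 = b := by simp [hv]
  simp only [hH, hv1, hv0]
  field_simp
  ring_nf


/-- Proposition 3.3 of the paper: application to special means, where
`A(x,y) = (x+y)/2` and `Lₙⁿ(a,b) = (b^{n+1} - a^{n+1})/((n+1)(b-a))`. -/
theorem stmt_12 (a b : ℝ) (ha : 0 < a) (hab : a < b)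
    (n : ℤ) (hn : 2 ≤ |n|)
    (lam mu : ℝ) (hlam : 0 ≤ lam) (hmu : 0 ≤ mu) (hlm : 0 < lam + mu)
    (p q : ℝ) (hq : 1 < q) (hpq : 1 / p + 1 / q = 1) :
    |(lam / (lam + mu)) * a ^ n + (mu / (lam + mu)) * b ^ n -
        (b ^ (n + 1) - a ^ (n + 1)) / (((n : ℝ) + 1) * (b - a))| ≤
      ((b - a) / (lam + mu)) * ((lam ^ (p + 1) + mu ^ (p + 1)) / (lam + mu)) ^ (1 / p) *
        (1 / (p + 1)) ^ (1 / p) * |(n : ℝ)| *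
        ((a ^ (((n : ℝ) - 1) * q) + b ^ (((n : ℝ) - 1) * q)) / 2) ^ (1 / q) := by
  have conj := aux_conj hq hpq
  have hp1 : 1 < p := (Real.holderConjugate_iff.mp conj).1
  have hp0 : 0 < p := lt_trans one_pos hp1
  have hq0 : 0 < q := lt_trans one_pos hq
  have hpne : p ≠ 0 := ne_of_gt hp0
  have hba : (0:ℝ) < b - a := by linarith
  set s : ℝ := lam + mu with hs_def
  have hs : 0 < s := hlm
  set c : ℝ := mu / s with hc_def
  have hc0 : 0 ≤ c := div_nonneg hmu hs.le
  have hc1 : c ≤ 1 := by rw [hc_def, div_le_one hs]; linarith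
  have hlc : lam / s = 1 - c := by
    rw [hc_def, eq_sub_iff_add_eq, ← add_div, hs_def, div_self (ne_of_gt hs)]
  have hne : n ≠ -1 := by
    rcases abs_cases n with ⟨h1, _⟩ | ⟨h1, _⟩ <;> omega
  have hn1 : (n : ℝ) + 1 ≠ 0 := by
    intro h
    exact hne (by exact_mod_cast (show (n:ℝ) = ((-1 : ℤ) : ℝ) by push_cast; linarith))
  -- the linear path
  set v : ℝ → ℝ := fun t => t * a + (1 - t) * b with hv_def
  have hv_cont : Continuous v := by fun_prop
  have hv_mem : ∀ t ∈ Icc (0:ℝ) 1, a ≤ v t ∧ v t ≤ b := by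
    intro t ht
    simp only [hv_def]
    constructor
    · nlinarith [mul_nonneg (by linarith [ht.2] : (0:ℝ) ≤ 1 - t) hba.le]
    · nlinarith [mul_nonneg ht.1 hba.le]
  have hv_pos : ∀ t ∈ Icc (0:ℝ) 1, 0 < v t := fun t ht => lt_of_lt_of_le ha (hv_mem t ht).1
  set r : ℝ := ((n : ℝ) - 1) * q with hr_def
  -- step 1 : the integral identity
  have key := aux_identity a b ha hab n hn1 c
  rw [hlc, key]
  have hpull : (∫ t in (0:ℝ)..1, (t - c) * (a - b) * (n:ℝ) * v t ^ (n - 1))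
      = ((a - b) * (n:ℝ)) * ∫ t in (0:ℝ)..1, (t - c) * v t ^ (n - 1) := by
    rw [← intervalIntegral.integral_const_mul]
    congr 1; funext t; ring
  rw [hpull, abs_mul]
  have habs1 : |(a - b) * (n:ℝ)| = (b - a) * |(n:ℝ)| := by
    rw [abs_mul, abs_of_neg (by linarith : a - b < 0)]; ring_nf
  rw [habs1]
  -- step 2 : Hölder
  set μ : Measure ℝ := volume.restrict (Ioc (0:ℝ) 1) with hμ
  haveI : IsFiniteMeasure μ := ⟨by rw [hμ, Measure.restrict_apply_univ]; simp [Real.volume_Ioc]⟩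
  set f : ℝ → ℝ := fun t => |t - c| with hf_def
  set g : ℝ → ℝ := fun t => |v t ^ (n - 1)| with hg_def
  have hf_cont : Continuous f := by fun_prop
  have hg_cont : ContinuousOn g (Ioc (0:ℝ) 1) := by
    apply ContinuousOn.abs
    exact (hv_cont.continuousOn).zpow₀ _
      (fun t ht => Or.inl (ne_of_gt (hv_pos t (Ioc_subset_Icc_self ht))))
  have hf_mem : MemLp f (ENNReal.ofReal p) μ := by
    apply MemLp.of_bound hf_cont.aestronglyMeasurable 1
    rw [hμ]
    refine (ae_restrict_iff' measurableSet_Ioc).2 (Filter.Eventually.of_forall fun t ht => ?_)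
    show ‖|t - c|‖ ≤ 1
    rw [Real.norm_eq_abs, abs_abs, abs_le]
    exact ⟨by linarith [ht.1.le], by linarith [ht.2]⟩
  have hg_mem : MemLp g (ENNReal.ofReal q) μ := by
    apply MemLp.of_bound (hg_cont.aestronglyMeasurable measurableSet_Ioc)
      (a ^ (n-1) + b ^ (n-1))
    refine (ae_restrict_iff' measurableSet_Ioc).2 (Filter.Eventually.of_forall fun t ht => ?_)
    have hm := hv_mem t (Ioc_subset_Icc_self ht)
    have hvp := hv_pos t (Ioc_subset_Icc_self ht)
    show ‖|v t ^ (n - 1)|‖ ≤ a ^ (n-1) + b ^ (n-1)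
    rw [Real.norm_eq_abs, abs_abs, abs_of_pos (zpow_pos hvp _)]
    rcases le_or_gt 0 (n - 1) with h | h
    · have h1 : v t ^ (n-1) ≤ b ^ (n-1) := by
        rw [← Real.rpow_intCast (v t), ← Real.rpow_intCast b]
        exact Real.rpow_le_rpow hvp.le hm.2 (by exact_mod_cast h)
      have h2 : (0:ℝ) ≤ a ^ (n-1) := (zpow_pos ha _).le
      linarith
    · have h1 : v t ^ (n-1) ≤ a ^ (n-1) := by
        rw [← Real.rpow_intCast (v t), ← Real.rpow_intCast a]
        exact Real.rpow_le_rpow_of_nonpos ha hm.1 (by exact_mod_cast h.le)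
      have h2 : (0:ℝ) ≤ b ^ (n-1) := (zpow_pos (lt_trans ha hab) _).le
      linarith
  have holder := integral_mul_le_Lp_mul_Lq_of_nonneg conj
    (Filter.Eventually.of_forall fun t => abs_nonneg _)
    (Filter.Eventually.of_forall fun t => abs_nonneg _) hf_mem hg_mem
  set E1 : ℝ := ∫ t, f t ^ p ∂μ with hE1_def
  set E2 : ℝ := ∫ t, g t ^ q ∂μ with hE2_def
  have habs2 : |∫ t in (0:ℝ)..1, (t - c) * v t ^ (n - 1)| ≤ ∫ t, f t * g t ∂μ := by
    refine le_trans (intervalIntegral.abs_integral_le_integral_abs zero_le_one) ?_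
    rw [intervalIntegral.integral_of_le zero_le_one, hμ]
    apply le_of_eq
    apply setIntegral_congr_fun measurableSet_Ioc
    intro t ht
    show |(t - c) * v t ^ (n - 1)| = |t - c| * |v t ^ (n - 1)|
    exact abs_mul _ _
  -- step 3 : value of E1
  have hE1 : E1 = (mu ^ (p+1) + lam ^ (p+1)) / (s ^ (p+1) * (p+1)) := by
    rw [hE1_def, hμ, ← intervalIntegral.integral_of_le zero_le_one]
    rw [show (fun t => f t ^ p) = fun t => |t - c| ^ p from rfl]
    rw [aux_moment hp0 hc0 hc1, ← hlc, hc_def]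
    rw [Real.div_rpow hmu hs.le, Real.div_rpow hlam hs.le]
    rw [← add_div, div_div]
  -- step 4 : bound on E2
  have hE2 : E2 ≤ (a ^ r + b ^ r) / 2 := by
    have heq : E2 = ∫ t in (0:ℝ)..1, v t ^ r := by
      rw [hE2_def, hμ, ← intervalIntegral.integral_of_le zero_le_one]
      apply intervalIntegral.integral_congr
      intro t ht
      rw [uIcc_of_le zero_le_one] at ht
      have hvp := hv_pos t ht
      show |v t ^ (n - 1)| ^ q = v t ^ r
      rw [abs_of_pos (zpow_pos hvp _), ← Real.rpow_intCast (v t) (n-1),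
        ← Real.rpow_mul hvp.le, hr_def]
      push_cast
      ring_nf
    rw [heq]
    have hint1 : IntervalIntegrable (fun t => v t ^ r) volume 0 1 := by
      apply ContinuousOn.intervalIntegrable
      apply ContinuousOn.rpow_const hv_cont.continuousOn
      intro t ht
      rw [uIcc_of_le zero_le_one] at ht
      exact Or.inl (ne_of_gt (hv_pos t ht))
    have hint2 : IntervalIntegrable (fun t => t * a ^ r + (1 - t) * b ^ r) volume 0 1 := by
      apply Continuous.intervalIntegrable; fun_prop
    have hmono := intervalIntegral.integral_mono_on zero_le_one hint1 hint2 ?_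
    · refine le_trans hmono (le_of_eq ?_)
      have hrw : (fun t : ℝ => t * a ^ r + (1 - t) * b ^ r)
          = fun t => t * (a ^ r - b ^ r) + b ^ r := by funext t; ring
      have ia : IntervalIntegrable (fun t : ℝ => t * (a ^ r - b ^ r)) volume 0 1 := by
        apply Continuous.intervalIntegrable; fun_prop
      rw [hrw, intervalIntegral.integral_add ia intervalIntegrable_const,
        intervalIntegral.integral_mul_const, integral_id, intervalIntegral.integral_const]
      norm_num; ring
    · intro t ht
      have := aux_combo (n - 1) hq.le ha (lt_trans ha hab) ht.1 ht.2
      rw [hr_def]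
      push_cast at this ⊢
      convert this using 3
  -- step 5 : assemble
  have main1 : |∫ t in (0:ℝ)..1, (t - c) * v t ^ (n - 1)| ≤ E1 ^ (1/p) * E2 ^ (1/q) :=
    habs2.trans holder
  have hE2nonneg : (0:ℝ) ≤ E2 := by
    rw [hE2_def]
    exact integral_nonneg fun t => Real.rpow_nonneg (abs_nonneg _) _
  have hM : E2 ^ (1/q) ≤ ((a ^ r + b ^ r)/2) ^ (1/q) :=
    Real.rpow_le_rpow hE2nonneg hE2 (by positivity)
  have hE1' : E1 ^ (1/p) =
      ((lam ^ (p+1) + mu ^ (p+1)) / s) ^ (1/p) * (1/(p+1)) ^ (1/p) * (1/s) := by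
    have e1 : E1 = ((lam ^ (p+1) + mu ^ (p+1)) / s) * (1/(p+1)) * ((1/s) ^ p) := by
      rw [hE1, Real.div_rpow zero_le_one hs.le, Real.one_rpow]
      rw [show s ^ (p+1) = s ^ p * s by rw [Real.rpow_add hs, Real.rpow_one]]
      field_simp
      ring_nf
    rw [e1, Real.mul_rpow (by positivity) (by positivity),
      Real.mul_rpow (by positivity) (by positivity)]
    congr 1
    rw [← Real.rpow_mul (by positivity : (0:ℝ) ≤ 1/s), mul_one_div_cancel hpne,
      Real.rpow_one]
  calc (b - a) * |(n:ℝ)| * |∫ t in (0:ℝ)..1, (t - c) * v t ^ (n - 1)|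
      ≤ (b - a) * |(n:ℝ)| * (E1 ^ (1/p) * E2 ^ (1/q)) :=
        mul_le_mul_of_nonneg_left main1 (by positivity)
    _ ≤ (b - a) * |(n:ℝ)| * (E1 ^ (1/p) * ((a ^ r + b ^ r)/2) ^ (1/q)) := by
        apply mul_le_mul_of_nonneg_left _ (by positivity)
        exact mul_le_mul_of_nonneg_left hM (Real.rpow_nonneg (by
          rw [hE1]; positivity) _)
    _ = ((b - a) / s) * ((lam ^ (p + 1) + mu ^ (p + 1)) / s) ^ (1 / p) *
        (1 / (p + 1)) ^ (1 / p) * |(n : ℝ)| * ((a ^ r + b ^ r) / 2) ^ (1 / q) := by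
        rw [hE1']; ring
end

section
/- Let 0 < a < b. For λ, μ ∈ [0,∞) with λ + μ > 0 and q > 1 with 1/p + 1/q = 1, set M₁ = H(a^{2q}, A_{λ/(λ+μ)}(b,a)^{2q})⁻¹ and M₂ = H(b^{2q}, A_{λ/(λ+μ)}(b,a)^{2q})⁻¹, where H(x,y) = 2xy/(x+y) is the unweighted harmonic mean and A_{λ/(λ+μ)}(b,a) = (λ b + μ a)/(λ+μ). Then |H_{λ/(λ+μ)}(a,b)⁻¹ − L(a,b)⁻¹| ≤ ((b−a)/(λ+μ)²) · (1/(p+1))^{1/p} · [λ² M₁^{1/q} + μ² M₂^{1/q}]. -/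
open Set MeasureTheory intervalIntegral

private lemma identity_lem (a c t : ℝ) (ha : 0 < a) (hc : 0 < c) :
    t / a + (1 - t) / (a + c) - (Real.log (a + c) - Real.log a) / c
      = c * ∫ s in (0:ℝ)..1, (t - s) * ((a + s * c) ^ 2)⁻¹ := by
  have hpos : ∀ s ∈ Set.uIcc (0:ℝ) 1, 0 < a + s * c := by
    intro s hs
    rw [Set.uIcc_of_le (by norm_num)] at hs
    nlinarith [hs.1, hs.2]
  set F : ℝ → ℝ := fun s => -(((t * c + a) / (a + s * c) + Real.log (a + s * c)) / c ^ 2) with hF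
  have hderiv : ∀ s ∈ Set.uIcc (0:ℝ) 1,
      HasDerivAt F ((t - s) * ((a + s * c) ^ 2)⁻¹) s := by
    intro s hs
    have hu : 0 < a + s * c := hpos s hs
    have h1 : HasDerivAt (fun s : ℝ => a + s * c) c s := by
      simpa [mul_comm] using ((hasDerivAt_id s).const_mul c).const_add a
    have h2 : HasDerivAt (fun s : ℝ => (t * c + a) / (a + s * c))
        (-(t * c + a) * c / (a + s * c) ^ 2) s := by
      have := (hasDerivAt_const s (t * c + a)).div h1 hu.ne'
      refine this.congr_deriv ?_
      field_simp
      ring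
    have h3 : HasDerivAt (fun s : ℝ => Real.log (a + s * c)) (c / (a + s * c)) s := by
      simpa [div_eq_mul_inv, mul_comm] using (h1.log hu.ne')
    have h4 := ((h2.add h3).div_const (c ^ 2)).neg
    refine h4.congr_deriv ?_
    field_simp
    ring
  have hcont : IntervalIntegrable (fun s => (t - s) * ((a + s * c) ^ 2)⁻¹) volume 0 1 := by
    apply ContinuousOn.intervalIntegrable
    apply ContinuousOn.mul (by fun_prop)
    apply ContinuousOn.inv₀ (by fun_prop)
    intro s hs
    exact pow_ne_zero _ (hpos s hs).ne'
  have := intervalIntegral.integral_eq_sub_of_hasDerivAt hderiv hcont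
  rw [this]
  have h0 : a + 0 * c = a := by ring
  have h1 : a + 1 * c = a + c := by ring
  rw [hF]
  simp only [h0, h1]
  have hb : 0 < a + c := by linarith
  field_simp
  ring

private lemma holder_Ioc {α β p q : ℝ} (hpq : Real.HolderConjugate p q) {f g : ℝ → ℝ}
    (hfm : Measurable f) (hgm : Measurable g)
    (hfn : ∀ s ∈ Ioc α β, 0 ≤ f s) (hgn : ∀ s ∈ Ioc α β, 0 ≤ g s)
    (Cf Cg : ℝ) (hbf : ∀ s ∈ Ioc α β, f s ≤ Cf) (hbg : ∀ s ∈ Ioc α β, g s ≤ Cg) :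
    ∫ s in Ioc α β, f s * g s ≤
      (∫ s in Ioc α β, f s ^ p) ^ (1 / p) * (∫ s in Ioc α β, g s ^ q) ^ (1 / q) := by
  set μ := volume.restrict (Ioc α β) with hμ
  have hfin : IsFiniteMeasure μ := by
    constructor
    rw [hμ, Measure.restrict_apply_univ]
    exact measure_Ioc_lt_top
  have hmeas : MeasurableSet (Ioc α β) := measurableSet_Ioc
  have haef : 0 ≤ᵐ[μ] f := by
    have h : ∀ᵐ (s : ℝ) ∂μ, 0 ≤ f s := by
      rw [hμ, MeasureTheory.ae_restrict_iff' hmeas]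
      filter_upwards with s hs using hfn s hs
    exact h
  have haeg : 0 ≤ᵐ[μ] g := by
    have h : ∀ᵐ (s : ℝ) ∂μ, 0 ≤ g s := by
      rw [hμ, MeasureTheory.ae_restrict_iff' hmeas]
      filter_upwards with s hs using hgn s hs
    exact h
  have hmemf : MemLp f (ENNReal.ofReal p) μ := by
    refine (memLp_top_of_bound hfm.aestronglyMeasurable (max Cf 0) ?_).mono_exponent le_top
    rw [hμ, MeasureTheory.ae_restrict_iff' hmeas]
    filter_upwards with s hs
    rw [Real.norm_of_nonneg (hfn s hs)]
    exact le_max_of_le_left (hbf s hs)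
  have hmemg : MemLp g (ENNReal.ofReal q) μ := by
    refine (memLp_top_of_bound hgm.aestronglyMeasurable (max Cg 0) ?_).mono_exponent le_top
    rw [hμ, MeasureTheory.ae_restrict_iff' hmeas]
    filter_upwards with s hs
    rw [Real.norm_of_nonneg (hgn s hs)]
    exact le_max_of_le_left (hbg s hs)
  exact MeasureTheory.integral_mul_le_Lp_mul_Lq_of_nonneg hpq haef haeg hmemf hmemg

private lemma int_kernel_left {α β : ℝ} (h : α ≤ β) {p : ℝ} (hp : 0 < p) :
    ∫ s in Ioc α β, (β - s) ^ p = (β - α) ^ (p + 1) / (p + 1) := by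
  rw [← intervalIntegral.integral_of_le h]
  rw [intervalIntegral.integral_comp_sub_left (fun x => x ^ p) β]
  rw [integral_rpow (Or.inl (by linarith))]
  rw [sub_self, Real.zero_rpow (by positivity)]
  ring

private lemma int_kernel_right {α β : ℝ} (h : α ≤ β) {p : ℝ} (hp : 0 < p) :
    ∫ s in Ioc α β, (s - α) ^ p = (β - α) ^ (p + 1) / (p + 1) := by
  rw [← intervalIntegral.integral_of_le h]
  have := intervalIntegral.integral_comp_sub_right (a := α) (b := β) (fun x => x ^ p) α
  rw [this]
  rw [integral_rpow (Or.inl (by linarith))]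
  rw [sub_self, Real.zero_rpow (by positivity)]
  ring

private lemma rpow_inv_convex {x y θ r : ℝ} (hx : 0 < x) (hy : 0 < y) (hθ0 : 0 ≤ θ) (hθ1 : θ ≤ 1)
    (hr : 0 ≤ r) :
    (((1 - θ) * x + θ * y) ^ r)⁻¹ ≤ (1 - θ) * (x ^ r)⁻¹ + θ * (y ^ r)⁻¹ := by
  have h1 : x ^ (1 - θ) * y ^ θ ≤ (1 - θ) * x + θ * y :=
    Real.geom_mean_le_arith_mean2_weighted (by linarith) hθ0 hx.le hy.le (by ring)
  have hgm : 0 < x ^ (1 - θ) * y ^ θ := by positivity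
  have h2 : (((1 - θ) * x + θ * y) ^ r)⁻¹ ≤ ((x ^ (1 - θ) * y ^ θ) ^ r)⁻¹ := by
    apply inv_anti₀ (by positivity)
    exact Real.rpow_le_rpow hgm.le h1 hr
  refine h2.trans ?_
  have key : ((x ^ (1 - θ) * y ^ θ) ^ r)⁻¹ = ((x ^ r)⁻¹) ^ (1 - θ) * ((y ^ r)⁻¹) ^ θ := by
    rw [Real.mul_rpow (by positivity) (by positivity)]
    rw [← Real.rpow_mul hx.le, ← Real.rpow_mul hy.le, mul_comm (1 - θ) r, mul_comm θ r,
      Real.rpow_mul hx.le, Real.rpow_mul hy.le, mul_inv,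
      ← Real.inv_rpow (Real.rpow_nonneg hx.le r), ← Real.inv_rpow (Real.rpow_nonneg hy.le r)]
  rw [key]
  exact Real.geom_mean_le_arith_mean2_weighted (by linarith) hθ0 (by positivity) (by positivity)
    (by ring)

private lemma convex_int_bound {a c α β : ℝ} (h : α ≤ β) {r : ℝ} (hr : 0 ≤ r) (hc : 0 < c)
    (hα : 0 < a + α * c) :
    ∫ s in Ioc α β, ((a + s * c) ^ r)⁻¹ ≤
      (β - α) * ((((a + α * c) ^ r)⁻¹ + ((a + β * c) ^ r)⁻¹) / 2) := by
  rcases eq_or_lt_of_le h with rfl | hlt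
  · simp
  set X := ((a + α * c) ^ r)⁻¹ with hX
  set Y := ((a + β * c) ^ r)⁻¹ with hY
  have hβpos : 0 < a + β * c := by nlinarith
  have hposIcc : ∀ s ∈ Icc α β, 0 < a + s * c := by
    intro s hs; nlinarith [hs.1, hs.2]
  have hcont : ContinuousOn (fun s => ((a + s * c) ^ r)⁻¹) (Icc α β) := by
    apply ContinuousOn.inv₀
    · apply ContinuousOn.rpow_const (by fun_prop)
      intro s hs; exact Or.inl (hposIcc s hs).ne'
    · intro s hs; exact (Real.rpow_pos_of_pos (hposIcc s hs) r).ne'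
  have hintφ : IntegrableOn (fun s => ((a + s * c) ^ r)⁻¹) (Ioc α β) := by
    exact (hcont.integrableOn_Icc).mono_set Ioc_subset_Icc_self
  set L : ℝ → ℝ := fun s => X + (Y - X) / (β - α) * (s - α) with hL
  have hintL : IntegrableOn L (Ioc α β) := by
    apply Continuous.integrableOn_Ioc
    fun_prop
  have hd : (0:ℝ) < β - α := by linarith
  have hmono : ∀ s ∈ Ioc α β, ((a + s * c) ^ r)⁻¹ ≤ L s := by
    intro s hs
    have hθ0 : 0 ≤ (s - α) / (β - α) := div_nonneg (by linarith [hs.1]) hd.le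
    have hθ1 : (s - α) / (β - α) ≤ 1 := by
      rw [div_le_one hd]; linarith [hs.2]
    have hts : (s - α) / (β - α) * (β - α) = s - α := div_mul_cancel₀ _ hd.ne'
    have hrepr : a + s * c =
        (1 - (s - α) / (β - α)) * (a + α * c) + (s - α) / (β - α) * (a + β * c) := by
      linear_combination (-c) * hts
    have := rpow_inv_convex hα hβpos hθ0 hθ1 hr
    rw [← hrepr] at this
    refine this.trans_eq ?_
    rw [hL, hX, hY]
    ring
  have h1 : ∫ s in Ioc α β, ((a + s * c) ^ r)⁻¹ ≤ ∫ s in Ioc α β, L s :=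
    setIntegral_mono_on hintφ hintL measurableSet_Ioc hmono
  refine h1.trans ?_
  have h2 : ∫ s in Ioc α β, L s = (β - α) * ((X + Y) / 2) := by
    rw [← intervalIntegral.integral_of_le h, hL]
    rw [intervalIntegral.integral_add (intervalIntegrable_const) (by
      apply IntervalIntegrable.const_mul
      exact (intervalIntegrable_id.sub intervalIntegrable_const))]
    rw [intervalIntegral.integral_const_mul, intervalIntegral.integral_const]
    rw [intervalIntegral.integral_sub intervalIntegrable_id intervalIntegrable_const]
    rw [integral_id, intervalIntegral.integral_const]
    field_simp
    ring
  rw [h2]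

private lemma piece {a c α β p q : ℝ} {f : ℝ → ℝ} (hc : 0 < c) (hα : 0 < a + α * c) (hαβ : α ≤ β)
    (hpq : Real.HolderConjugate p q)
    (hfm : Measurable f) (hf0 : ∀ s ∈ Ioc α β, 0 ≤ f s) (hfb : ∀ s ∈ Ioc α β, f s ≤ β - α)
    (hfint : ∫ s in Ioc α β, f s ^ p = (β - α) ^ (p + 1) / (p + 1)) :
    ∫ s in Ioc α β, f s * ((a + s * c) ^ 2)⁻¹ ≤
      (β - α) ^ 2 * (1 / (p + 1)) ^ (1 / p) *
        ((((a + α * c) ^ (2 * q))⁻¹ + ((a + β * c) ^ (2 * q))⁻¹) / 2) ^ (1 / q) := by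
  set E := (((a + α * c) ^ (2 * q))⁻¹ + ((a + β * c) ^ (2 * q))⁻¹) / 2 with hE
  have hβpos : 0 < a + β * c := by nlinarith
  have hp0 : 0 < p := hpq.pos
  have hq0 : 0 < q := hpq.symm.pos
  have hp1 : (0:ℝ) < p + 1 := by linarith
  have hcp : (0:ℝ) ≤ 1 / (p + 1) := by positivity
  have hiq : (0:ℝ) ≤ 1 / q := by positivity
  have hEpos : 0 < E := by
    rw [hE]; positivity
  rcases eq_or_lt_of_le hαβ with rfl | hlt
  · rw [show Ioc α α = (∅ : Set ℝ) from Ioc_self α]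
    simp
  have hD : (0:ℝ) < β - α := by linarith
  have hposIoc : ∀ s ∈ Ioc α β, 0 < a + s * c := by
    intro s hs; nlinarith [hs.1, hs.2]
  set g : ℝ → ℝ := fun s => ((a + s * c) ^ 2)⁻¹ with hg
  have hgm : Measurable g := by fun_prop
  have hgn : ∀ s ∈ Ioc α β, 0 ≤ g s := by
    intro s hs; positivity
  have hgb : ∀ s ∈ Ioc α β, g s ≤ ((a + α * c) ^ 2)⁻¹ := by
    intro s hs
    apply inv_anti₀ (by positivity)
    have h2 : a + α * c ≤ a + s * c := by nlinarith [hs.1]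
    exact pow_le_pow_left₀ hα.le h2 2
  have holder := holder_Ioc hpq hfm hgm hf0 hgn (β - α) (((a + α * c) ^ 2)⁻¹) hfb hgb
  have hgq : ∫ s in Ioc α β, g s ^ q = ∫ s in Ioc α β, ((a + s * c) ^ (2 * q))⁻¹ := by
    apply setIntegral_congr_fun measurableSet_Ioc
    intro s hs
    have hu : 0 < a + s * c := hposIoc s hs
    rw [hg]
    simp only
    rw [← Real.rpow_natCast (a + s * c) 2, Real.inv_rpow (Real.rpow_nonneg hu.le _),
      ← Real.rpow_mul hu.le]
    norm_num
  have hconv : ∫ s in Ioc α β, ((a + s * c) ^ (2 * q))⁻¹ ≤ (β - α) * E :=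
    convex_int_bound hαβ (by linarith) hc hα
  have hq2 : (∫ s in Ioc α β, g s ^ q) ^ (1 / q) ≤ ((β - α) * E) ^ (1 / q) := by
    apply Real.rpow_le_rpow
    · apply setIntegral_nonneg measurableSet_Ioc
      intro s hs; positivity
    · rw [hgq]; exact hconv
    · exact hiq
  have hfq : (∫ s in Ioc α β, f s ^ p) ^ (1 / p) =
      (β - α) ^ ((p + 1) * (1 / p)) * (1 / (p + 1)) ^ (1 / p) := by
    rw [hfint, div_eq_mul_inv, ← one_div]
    rw [Real.mul_rpow (by positivity) hcp, ← Real.rpow_mul hD.le]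
  calc ∫ s in Ioc α β, f s * g s
      ≤ (∫ s in Ioc α β, f s ^ p) ^ (1 / p) * (∫ s in Ioc α β, g s ^ q) ^ (1 / q) := holder
    _ ≤ (∫ s in Ioc α β, f s ^ p) ^ (1 / p) * ((β - α) * E) ^ (1 / q) := by
        apply mul_le_mul_of_nonneg_left hq2
        rw [hfq]
        exact mul_nonneg (Real.rpow_nonneg hD.le _) (Real.rpow_nonneg hcp _)
    _ = (β - α) ^ 2 * (1 / (p + 1)) ^ (1 / p) * E ^ (1 / q) := by
        rw [hfq, Real.mul_rpow hD.le hEpos.le]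
        have hfinal : (β - α) ^ ((p + 1) * (1 / p)) * (β - α) ^ (1 / q) = (β - α) ^ (2:ℝ) := by
          rw [← Real.rpow_add hD]
          congr 1
          have hp0' : p ≠ 0 := hpq.pos.ne'
          have := hpq.inv_add_inv_eq_one
          field_simp at this ⊢
          nlinarith [this]
        have h2 : (β - α) ^ (2:ℝ) = (β - α) ^ (2:ℕ) := by
          rw [show ((2:ℝ)) = ((2:ℕ):ℝ) by norm_num, Real.rpow_natCast]
        calc (β - α) ^ ((p+1)*(1/p)) * (1/(p+1)) ^ (1/p) * ((β - α) ^ (1/q) * E ^ (1/q))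
            = ((β - α) ^ ((p+1)*(1/p)) * (β - α) ^ (1/q)) * (1/(p+1)) ^ (1/p) * E ^ (1/q) := by
              ring
          _ = (β - α) ^ 2 * (1 / (p + 1)) ^ (1 / p) * E ^ (1 / q) := by
              rw [hfinal, h2]

private lemma key_lem {a b t p q : ℝ} (ha : 0 < a) (hab : a < b) (ht0 : 0 ≤ t) (ht1 : t ≤ 1)
    (hpq : Real.HolderConjugate p q) :
    |t / a + (1 - t) / b - (Real.log b - Real.log a) / (b - a)| ≤
      (b - a) * (1 / (p + 1)) ^ (1 / p) *
        (t ^ 2 * (((a ^ (2*q))⁻¹ + ((a + t * (b - a)) ^ (2*q))⁻¹) / 2) ^ (1/q) +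
         (1 - t) ^ 2 * ((((a + t * (b - a)) ^ (2*q))⁻¹ + (b ^ (2*q))⁻¹) / 2) ^ (1/q)) := by
  set c := b - a with hc_def
  have hc : 0 < c := by rw [hc_def]; linarith
  have hb : a + c = b := by rw [hc_def]; ring
  have hid := identity_lem a c t ha hc
  rw [hb] at hid
  have hposIcc : ∀ s ∈ Icc (0:ℝ) 1, 0 < a + s * c := by
    intro s hs; nlinarith [hs.1, hs.2]
  have hcont : ContinuousOn (fun s => (t - s) * ((a + s * c) ^ 2)⁻¹) (Icc (0:ℝ) 1) := by
    apply ContinuousOn.mul (by fun_prop)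
    apply ContinuousOn.inv₀ (by fun_prop)
    intro s hs
    exact pow_ne_zero _ (hposIcc s hs).ne'
  have hii1 : IntervalIntegrable (fun s => (t - s) * ((a + s * c) ^ 2)⁻¹) volume 0 t := by
    apply ContinuousOn.intervalIntegrable
    apply hcont.mono
    rw [Set.uIcc_of_le ht0]
    exact Icc_subset_Icc le_rfl ht1
  have hii2 : IntervalIntegrable (fun s => (t - s) * ((a + s * c) ^ 2)⁻¹) volume t 1 := by
    apply ContinuousOn.intervalIntegrable
    apply hcont.mono
    rw [Set.uIcc_of_le ht1]
    exact Icc_subset_Icc ht0 le_rfl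
  set I1 := ∫ s in Ioc (0:ℝ) t, (t - s) * ((a + s * c) ^ 2)⁻¹ with hI1_def
  set I2 := ∫ s in Ioc t (1:ℝ), (s - t) * ((a + s * c) ^ 2)⁻¹ with hI2_def
  have hsplit : (∫ s in (0:ℝ)..1, (t - s) * ((a + s * c) ^ 2)⁻¹) = I1 - I2 := by
    rw [← intervalIntegral.integral_add_adjacent_intervals hii1 hii2]
    have he1 : (∫ s in (0:ℝ)..t, (t - s) * ((a + s * c) ^ 2)⁻¹) = I1 :=
      intervalIntegral.integral_of_le ht0
    have he2 : (∫ s in t..(1:ℝ), (t - s) * ((a + s * c) ^ 2)⁻¹) = -I2 := by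
      have : (∫ s in t..(1:ℝ), (t - s) * ((a + s * c) ^ 2)⁻¹)
          = ∫ s in t..(1:ℝ), -((s - t) * ((a + s * c) ^ 2)⁻¹) := by
        apply intervalIntegral.integral_congr
        intro s _
        ring
      rw [this, intervalIntegral.integral_neg, intervalIntegral.integral_of_le ht1]
    rw [he1, he2]
    ring
  have hI1nn : 0 ≤ I1 := by
    apply setIntegral_nonneg measurableSet_Ioc
    intro s hs
    have := hposIcc s ⟨hs.1.le, le_trans hs.2 ht1⟩
    have h1 : 0 ≤ t - s := by linarith [hs.2]
    positivity
  have hI2nn : 0 ≤ I2 := by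
    apply setIntegral_nonneg measurableSet_Ioc
    intro s hs
    have := hposIcc s ⟨le_trans ht0 hs.1.le, hs.2⟩
    have h1 : 0 ≤ s - t := by linarith [hs.1]
    positivity
  -- bounds on the pieces
  have hbound1 : I1 ≤ t ^ 2 * (1 / (p + 1)) ^ (1 / p) *
      (((a ^ (2*q))⁻¹ + ((a + t * c) ^ (2*q))⁻¹) / 2) ^ (1/q) := by
    have hα : 0 < a + 0 * c := by simpa using ha
    have happ := piece (f := fun s => t - s) hc hα ht0 hpq (by fun_prop)
      (fun s hs => by show (0:ℝ) ≤ t - s; linarith [hs.2])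
      (fun s hs => by show t - s ≤ t - 0; linarith [hs.1])
      (int_kernel_left ht0 hpq.pos)
    simp only [sub_zero, zero_mul, add_zero] at happ
    exact happ
  have hbound2 : I2 ≤ (1 - t) ^ 2 * (1 / (p + 1)) ^ (1 / p) *
      ((((a + t * c) ^ (2*q))⁻¹ + (b ^ (2*q))⁻¹) / 2) ^ (1/q) := by
    have hα : 0 < a + t * c := by nlinarith
    have happ := piece (f := fun s => s - t) hc hα ht1 hpq (by fun_prop)
      (fun s hs => by show (0:ℝ) ≤ s - t; linarith [hs.1])
      (fun s hs => by show s - t ≤ 1 - t; linarith [hs.2])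
      (int_kernel_right ht1 hpq.pos)
    simp only [one_mul, hb] at happ
    exact happ
  rw [hid, hsplit]
  have habs : |c * (I1 - I2)| ≤ c * (I1 + I2) := by
    rw [abs_mul, abs_of_pos hc]
    apply mul_le_mul_of_nonneg_left _ hc.le
    exact abs_le.mpr ⟨by linarith, by linarith⟩
  refine habs.trans ?_
  have := add_le_add hbound1 hbound2
  calc c * (I1 + I2) ≤ c * (t ^ 2 * (1 / (p + 1)) ^ (1 / p) *
        (((a ^ (2*q))⁻¹ + ((a + t * c) ^ (2*q))⁻¹) / 2) ^ (1/q) +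
      (1 - t) ^ 2 * (1 / (p + 1)) ^ (1 / p) *
        ((((a + t * c) ^ (2*q))⁻¹ + (b ^ (2*q))⁻¹) / 2) ^ (1/q)) :=
      mul_le_mul_of_nonneg_left this hc.le
    _ = c * (1 / (p + 1)) ^ (1 / p) *
        (t ^ 2 * (((a ^ (2*q))⁻¹ + ((a + t * c) ^ (2*q))⁻¹) / 2) ^ (1/q) +
         (1 - t) ^ 2 * ((((a + t * c) ^ (2*q))⁻¹ + (b ^ (2*q))⁻¹) / 2) ^ (1/q)) := by
      ring

/-- Proposition 3.5 of the paper: application to special means, where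
`H(x,y) = 2xy/(x+y)`, `A_{λ/(λ+μ)}(b,a) = (λb+μa)/(λ+μ)`,
`H_{λ/(λ+μ)}(a,b)⁻¹ = (λ/(λ+μ))/a + (μ/(λ+μ))/b` and
`L(a,b)⁻¹ = (ln b - ln a)/(b-a)`. -/
theorem stmt_14 (a b : ℝ) (ha : 0 < a) (hab : a < b)
    (lam mu : ℝ) (hlam : 0 ≤ lam) (hmu : 0 ≤ mu) (hlm : 0 < lam + mu)
    (p q : ℝ) (hq : 1 < q) (hpq : 1 / p + 1 / q = 1)
    (M1 M2 : ℝ)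
    (hM1 : M1 = (2 * a ^ (2 * q) * ((lam * b + mu * a) / (lam + mu)) ^ (2 * q) /
      (a ^ (2 * q) + ((lam * b + mu * a) / (lam + mu)) ^ (2 * q)))⁻¹)
    (hM2 : M2 = (2 * b ^ (2 * q) * ((lam * b + mu * a) / (lam + mu)) ^ (2 * q) /
      (b ^ (2 * q) + ((lam * b + mu * a) / (lam + mu)) ^ (2 * q)))⁻¹) :
    |(lam / (lam + mu)) / a + (mu / (lam + mu)) / b -
        (Real.log b - Real.log a) / (b - a)| ≤
      ((b - a) / (lam + mu) ^ 2) * (1 / (p + 1)) ^ (1 / p) *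
        (lam ^ 2 * M1 ^ (1 / q) + mu ^ 2 * M2 ^ (1 / q)) := by
  have hpq' : Real.HolderConjugate p q := by
    refine (Real.holderConjugate_iff.mpr ⟨hq, ?_⟩).symm
    rw [inv_eq_one_div, inv_eq_one_div]
    linarith
  set t := lam / (lam + mu) with ht_def
  have ht0 : 0 ≤ t := div_nonneg hlam hlm.le
  have ht1 : t ≤ 1 := by
    rw [ht_def, div_le_one hlm]
    linarith
  have h1t : 1 - t = mu / (lam + mu) := by
    rw [ht_def]
    field_simp
    ring
  have hA : (lam * b + mu * a) / (lam + mu) = a + t * (b - a) := by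
    rw [ht_def]
    field_simp
    ring
  have hApos : 0 < a + t * (b - a) := by nlinarith
  have hXpos : 0 < a ^ (2 * q) := Real.rpow_pos_of_pos ha _
  have hYpos : 0 < (a + t * (b - a)) ^ (2 * q) := Real.rpow_pos_of_pos hApos _
  have hZpos : 0 < b ^ (2 * q) := Real.rpow_pos_of_pos (lt_trans ha hab) _
  have hharm : ∀ X Y : ℝ, 0 < X → 0 < Y → (2 * X * Y / (X + Y))⁻¹ = (X⁻¹ + Y⁻¹) / 2 := by
    intro X Y hX hY
    rw [inv_div]
    rw [div_eq_div_iff (by positivity) (by norm_num)]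
    field_simp
    ring
  have hM1' : M1 = ((a ^ (2*q))⁻¹ + ((a + t * (b - a)) ^ (2*q))⁻¹) / 2 := by
    rw [hM1, hA]
    exact hharm _ _ hXpos hYpos
  have hM2' : M2 = (((a + t * (b - a)) ^ (2*q))⁻¹ + (b ^ (2*q))⁻¹) / 2 := by
    rw [hM2, hA]
    rw [hharm _ _ hZpos hYpos]
    ring
  have hkey := key_lem ha hab ht0 ht1 hpq'
  rw [← hM1', ← hM2', h1t] at hkey
  refine hkey.trans_eq ?_
  rw [ht_def]
  field_simp
end
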